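/- arXiv:1912.11386 — 2 statements merged into one kernel-verified Lean document; each statement's English description precedes it below -/
import Mathlib

section
/- Let R be an exchange ring, n ≥ 1 a positive integer and I a twosided ideal of R. Then the relative elementary subgroup E_n(R,I) is a normal subgroup of the general linear group GL_n(R). -/
open Matrix

/-- An exchange ring: for every `x` there is an idempotent `e ∈ xR` with `1 - e ∈ (1-x)R`. -/
def IsExchangeRing (R : Type*) [Ring R] : Prop :=
  ∀ x : R, ∃ e r s : R, e * e = e ∧ e = x * r ∧ 1 - e = (1 - x) * s

/-- The elementary transvection `t_{ij}(x) = e + x e^{ij}` as an element of `GL n R`. -/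
def transv {n : ℕ} {R : Type*} [Ring R] (i j : Fin n) (hij : i ≠ j) (x : R) :
    (Matrix (Fin n) (Fin n) R)ˣ :=
  ⟨1 + Matrix.single i j x, 1 + Matrix.single i j (-x),
    by
      have h0 := (Matrix.single_mul_single_of_ne (c := x) i j i hij.symm (-x) :
          Matrix.single i j x * Matrix.single i j (-x) = 0)
      have h1 := (Matrix.single_mul_single_of_ne (c := -x) i j i hij.symm x :
          Matrix.single i j (-x) * Matrix.single i j x = 0)
      simp [mul_add, add_mul, h0, h1, ← Matrix.single_add, add_assoc],
    by
      have h0 := (Matrix.single_mul_single_of_ne (c := x) i j i hij.symm (-x) :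
          Matrix.single i j x * Matrix.single i j (-x) = 0)
      have h1 := (Matrix.single_mul_single_of_ne (c := -x) i j i hij.symm x :
          Matrix.single i j (-x) * Matrix.single i j x = 0)
      simp [mul_add, add_mul, h0, h1, ← Matrix.single_add, add_assoc]⟩

/-- The elementary subgroup `E_n(R)` of `GL_n(R)`. -/
def elemGroup (n : ℕ) (R : Type*) [Ring R] : Subgroup ((Matrix (Fin n) (Fin n) R)ˣ) :=
  Subgroup.closure { g | ∃ i j : Fin n, ∃ hij : i ≠ j, ∃ x : R, g = transv i j hij x }

/-- The preelementary subgroup `E_n(I)` of level a two-sided ideal `I`. -/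
def preElem (n : ℕ) (R : Type*) [Ring R] (I : TwoSidedIdeal R) : Subgroup ((Matrix (Fin n) (Fin n) R)ˣ) :=
  Subgroup.closure { g | ∃ i j : Fin n, ∃ hij : i ≠ j, ∃ x ∈ I, g = transv i j hij x }

/-- The relative elementary subgroup `E_n(R,I)`: the normal closure of `E_n(I)` in `E_n(R)`. -/
def relElem (n : ℕ) (R : Type*) [Ring R] (I : TwoSidedIdeal R) : Subgroup ((Matrix (Fin n) (Fin n) R)ˣ) :=
  Subgroup.closure { g | ∃ τ ∈ elemGroup n R, ∃ ε ∈ preElem n R I, g = τ⁻¹ * ε * τ }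

/-- The full congruence subgroup `C_n(R,I)`: preimage of the center of `GL_n(R/I)`. -/
def congrSubgroup (n : ℕ) (R : Type*) [Ring R] (I : TwoSidedIdeal R) :
    Subgroup ((Matrix (Fin n) (Fin n) R)ˣ) :=
  Subgroup.comap
    (Units.map ((RingHom.mapMatrix (RingCon.mk' I.ringCon)).toMonoidHom :
      Matrix (Fin n) (Fin n) R →* Matrix (Fin n) (Fin n) I.ringCon.Quotient))
    (Subgroup.center ((Matrix (Fin n) (Fin n) I.ringCon.Quotient)ˣ))

/-- `x` is a product of `m` `H`-conjugates of `a` and `a⁻¹`. -/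
def IsProdConj {G : Type*} [Group G] (H : Subgroup G) (a x : G) (m : ℕ) : Prop :=
  ∃ f : Fin m → G, (∀ k, ∃ h ∈ H, f k = h⁻¹ * a * h ∨ f k = h⁻¹ * a⁻¹ * h) ∧
    x = (List.ofFn f).prod

namespace RelElemAux

open Matrix

variable {n : ℕ} {R : Type*} [Ring R]

local notation "M" => Matrix (Fin n) (Fin n) R

lemma vmv_mul_vmv (a b c d : Fin n → R) :
    vecMulVec a b * vecMulVec c d = vecMulVec (fun i => a i * (b ⬝ᵥ c)) d := by
  ext i j
  simp only [Matrix.mul_apply, vecMulVec_apply, dotProduct, Finset.mul_sum, Finset.sum_mul]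
  exact Finset.sum_congr rfl fun k _ => by noncomm_ring

lemma std_eq_vmv (i j : Fin n) (x : R) :
    Matrix.single i j x = vecMulVec (Pi.single i x) (Pi.single j 1) := by
  ext a b
  simp [Matrix.single, vecMulVec_apply, Pi.single_apply]
  split_ifs <;> simp_all

lemma dot_single (a b : Fin n) (x y : R) :
    (Pi.single a x : Fin n → R) ⬝ᵥ (Pi.single b y) = if a = b then x * y else 0 := by
  simp only [dotProduct, Pi.single_apply, ite_mul, zero_mul, mul_ite, mul_zero,
    Finset.sum_ite_eq', Finset.mem_univ, if_true]
  by_cases h : a = b <;> simp [h, Ne.symm, eq_comm]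

lemma transv_val (i j : Fin n) (hij : i ≠ j) (x : R) :
    (transv i j hij x).val = 1 + vecMulVec (Pi.single i x) (Pi.single j 1) := by
  rw [← std_eq_vmv]; rfl

lemma transv_inv (i j : Fin n) (hij : i ≠ j) (x : R) :
    (transv i j hij x)⁻¹ = transv i j hij (-x) := by
  apply Units.ext
  rfl

variable (I : TwoSidedIdeal R)

lemma transv_mem_elemGroup (i j : Fin n) (hij : i ≠ j) (x : R) :
    transv i j hij x ∈ elemGroup n R :=
  Subgroup.subset_closure ⟨i, j, hij, x, rfl⟩

lemma transv_mem_preElem (i j : Fin n) (hij : i ≠ j) {x : R} (hx : x ∈ I) :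
    transv i j hij x ∈ preElem n R I :=
  Subgroup.subset_closure ⟨i, j, hij, x, hx, rfl⟩

lemma preElem_le_relElem : preElem n R I ≤ relElem n R I := by
  intro u hu
  exact Subgroup.subset_closure ⟨1, one_mem _, u, hu, by simp⟩

lemma conjGen_mem_relElem {τ ε : Mˣ} (hτ : τ ∈ elemGroup n R) (hε : ε ∈ preElem n R I) :
    τ⁻¹ * ε * τ ∈ relElem n R I :=
  Subgroup.subset_closure ⟨τ, hτ, ε, hε, rfl⟩

lemma relElem_conj {τ : Mˣ} (hτ : τ ∈ elemGroup n R) {u : Mˣ} (hu : u ∈ relElem n R I) :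
    τ⁻¹ * u * τ ∈ relElem n R I := by
  have key : relElem n R I ≤ Subgroup.comap ((MulAut.conj τ⁻¹).toMonoidHom) (relElem n R I) := by
    rw [relElem, Subgroup.closure_le]
    rintro g ⟨σ, hσ, ε, hε, rfl⟩
    simp only [Subgroup.coe_comap, Set.mem_preimage, MulEquiv.coe_toMonoidHom,
      MulAut.conj_apply, SetLike.mem_coe, inv_inv]
    have : τ⁻¹ * (σ⁻¹ * ε * σ) * τ = (σ * τ)⁻¹ * ε * (σ * τ) := by group
    rw [this]
    exact conjGen_mem_relElem I (mul_mem hσ hτ) hε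
  have := key hu
  simpa [MulAut.conj_apply] using this

end RelElemAux

namespace RelElemAux

open Matrix

variable {n : ℕ} {R : Type*} [Ring R] (I : TwoSidedIdeal R)

local notation "MM" => Matrix (Fin n) (Fin n) R

lemma single_one_dot (k : Fin n) (c : Fin n → R) :
    (Pi.single k 1 : Fin n → R) ⬝ᵥ c = c k := by
  simp [dotProduct, Pi.single_apply, ite_mul, zero_mul, one_mul]

lemma dot_single_one (k : Fin n) (c : Fin n → R) :
    c ⬝ᵥ (Pi.single k 1 : Fin n → R) = c k := by
  simp [dotProduct, Pi.single_apply, mul_ite, mul_zero, mul_one]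

lemma dot_mul_right (w v : Fin n → R) (β : R) :
    w ⬝ᵥ (fun i => v i * β) = (w ⬝ᵥ v) * β := by
  simp [dotProduct, Finset.sum_mul, mul_assoc]

lemma vmv_zero_mid (a d : Fin n → R) : vecMulVec (fun i => a i * 0) d = (0 : MM) := by
  ext i j; simp [vecMulVec_apply]

lemma vmv_single_swap (k a : Fin n) (x : R) :
    vecMulVec (Pi.single k x : Fin n → R) (Pi.single a 1) =
      vecMulVec (Pi.single k 1 : Fin n → R) (Pi.single a x) := by
  ext i j
  by_cases h1 : i = k <;> by_cases h2 : j = a <;>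
    simp [vecMulVec_apply, Pi.single_apply, h1, h2]

/-- existence of a unit in `relElem` with given value. -/
def Mem1 (A : MM) : Prop := ∃ u : (MM)ˣ, u ∈ relElem n R I ∧ u.val = A

lemma Mem1.one : Mem1 I (1 : MM) := ⟨1, one_mem _, rfl⟩

lemma Mem1.mul {A B : MM} (hA : Mem1 I A) (hB : Mem1 I B) : Mem1 I (A * B) := by
  obtain ⟨u, hu, hval⟩ := hA
  obtain ⟨u', hu', hval'⟩ := hB
  exact ⟨u * u', mul_mem hu hu', by rw [Units.val_mul, hval, hval']⟩

lemma prod_col (k : Fin n) (s : Finset (Fin n)) :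
    ∀ (c : Fin n → R), (∀ i ∉ s, c i = 0) → c k = 0 → (∀ i, c i ∈ I) →
    Mem1 I (1 + vecMulVec c (Pi.single k 1)) := by
  classical
  induction s using Finset.induction_on with
  | empty =>
    intro c h0 _ _
    have hc : c = 0 := funext fun i => h0 i (by simp)
    subst hc
    have hz : vecMulVec (0 : Fin n → R) (Pi.single k 1) = (0 : MM) := by
      ext i j; simp [vecMulVec_apply]
    rw [hz, add_zero]
    exact Mem1.one I
  | @insert a s ha ih =>
    intro c h0 hk hI
    set c' : Fin n → R := Function.update c a 0 with hc'
    have hc'supp : ∀ i ∉ s, c' i = 0 := by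
      intro i hi
      by_cases h : i = a
      · subst h; simp [hc']
      · rw [hc', Function.update_apply, if_neg h]
        exact h0 i (by simp [h, hi])
    have hc'k : c' k = 0 := by
      by_cases h : k = a
      · subst h; simp [hc']
      · rw [hc', Function.update_apply, if_neg h]; exact hk
    have hc'I : ∀ i, c' i ∈ I := by
      intro i
      rw [hc', Function.update_apply]
      split_ifs
      · exact I.zero_mem
      · exact hI i
    have hXY : vecMulVec (Pi.single a (c a)) (Pi.single k 1) * vecMulVec c' (Pi.single k 1)
        = (0 : MM) := by
      rw [vmv_mul_vmv, single_one_dot, hc'k]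
      exact vmv_zero_mid _ _
    have hadd : vecMulVec (Pi.single a (c a)) (Pi.single k 1) + vecMulVec c' (Pi.single k 1)
        = vecMulVec c (Pi.single k 1) := by
      ext i j
      simp only [Matrix.add_apply, vecMulVec_apply, Pi.single_apply, hc',
        Function.update_apply]
      by_cases h : i = a <;> simp [h, add_mul]
    have hsplit : (1 : MM) + vecMulVec c (Pi.single k 1) =
        (1 + vecMulVec (Pi.single a (c a)) (Pi.single k 1)) *
          (1 + vecMulVec c' (Pi.single k 1)) := by
      calc (1 : MM) + vecMulVec c (Pi.single k 1)
          = 1 + (vecMulVec (Pi.single a (c a)) (Pi.single k 1) + vecMulVec c' (Pi.single k 1))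
            + vecMulVec (Pi.single a (c a)) (Pi.single k 1) * vecMulVec c' (Pi.single k 1) := by
            rw [hXY, hadd, add_zero]
        _ = (1 + vecMulVec (Pi.single a (c a)) (Pi.single k 1)) *
              (1 + vecMulVec c' (Pi.single k 1)) := by noncomm_ring
    rw [hsplit]
    refine Mem1.mul I ?_ (ih c' hc'supp hc'k hc'I)
    by_cases hak : a = k
    · subst hak
      rw [hk]
      have : (Pi.single a (0:R)) = (0 : Fin n → R) := by simp
      rw [this]
      have hz : vecMulVec (0 : Fin n → R) (Pi.single a 1) = (0 : MM) := by
        ext i j; simp [vecMulVec_apply]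
      rw [hz, add_zero]
      exact Mem1.one I
    · exact ⟨transv a k hak (c a),
        preElem_le_relElem I (transv_mem_preElem I a k hak (hI a)),
        transv_val a k hak (c a)⟩

lemma prod_row (k : Fin n) (s : Finset (Fin n)) :
    ∀ (d : Fin n → R), (∀ i ∉ s, d i = 0) → d k = 0 →
    ∃ u : (MM)ˣ, u ∈ elemGroup n R ∧ u.val = 1 + vecMulVec (Pi.single k 1) d := by
  classical
  induction s using Finset.induction_on with
  | empty =>
    intro d h0 _
    have hd : d = 0 := funext fun i => h0 i (by simp)
    subst hd
    have hz : vecMulVec (Pi.single k 1 : Fin n → R) (0 : Fin n → R) = (0 : MM) := by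
      ext i j; simp [vecMulVec_apply]
    exact ⟨1, one_mem _, by rw [hz, add_zero]; rfl⟩
  | @insert a s ha ih =>
    intro d h0 hk
    set d' : Fin n → R := Function.update d a 0 with hd'
    have hd'supp : ∀ i ∉ s, d' i = 0 := by
      intro i hi
      by_cases h : i = a
      · subst h; simp [hd']
      · rw [hd', Function.update_apply, if_neg h]
        exact h0 i (by simp [h, hi])
    have hd'k : d' k = 0 := by
      by_cases h : k = a
      · subst h; simp [hd']
      · rw [hd', Function.update_apply, if_neg h]; exact hk
    obtain ⟨u', hu', hu'val⟩ := ih d' hd'supp hd'k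
    have hmid : (Pi.single a (d a) : Fin n → R) ⬝ᵥ (Pi.single k 1) = 0 := by
      rw [dot_single_one]
      by_cases h : a = k
      · subst h; rw [Pi.single_eq_same]; exact hk
      · rw [Pi.single_eq_of_ne (Ne.symm h)]
    have hXY : vecMulVec (Pi.single k 1 : Fin n → R) (Pi.single a (d a)) *
        vecMulVec (Pi.single k 1 : Fin n → R) d' = (0 : MM) := by
      rw [vmv_mul_vmv]
      have : (Pi.single a (d a) : Fin n → R) ⬝ᵥ (Pi.single k 1) = 0 := hmid
      rw [this]
      exact vmv_zero_mid _ _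
    have hadd : vecMulVec (Pi.single k 1 : Fin n → R) (Pi.single a (d a)) +
        vecMulVec (Pi.single k 1 : Fin n → R) d' = vecMulVec (Pi.single k 1 : Fin n → R) d := by
      ext i j
      simp only [Matrix.add_apply, vecMulVec_apply, Pi.single_apply, hd',
        Function.update_apply]
      by_cases h : j = a <;> simp [h, mul_add]
    have hsplit : (1 : MM) + vecMulVec (Pi.single k 1) d =
        (1 + vecMulVec (Pi.single k 1 : Fin n → R) (Pi.single a (d a))) *
          (1 + vecMulVec (Pi.single k 1 : Fin n → R) d') := by
      calc (1 : MM) + vecMulVec (Pi.single k 1) d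
          = 1 + (vecMulVec (Pi.single k 1 : Fin n → R) (Pi.single a (d a)) +
              vecMulVec (Pi.single k 1 : Fin n → R) d')
            + vecMulVec (Pi.single k 1 : Fin n → R) (Pi.single a (d a)) *
              vecMulVec (Pi.single k 1 : Fin n → R) d' := by rw [hXY, hadd, add_zero]
        _ = _ := by noncomm_ring
    by_cases hka : k = a
    · subst hka
      have : d k = 0 := hk
      refine ⟨u', hu', ?_⟩
      rw [hsplit, hu'val]
      rw [this]
      have hz : (Pi.single k (0:R)) = (0 : Fin n → R) := by simp
      rw [hz]
      have hz2 : vecMulVec (Pi.single k 1 : Fin n → R) (0 : Fin n → R) = (0 : MM) := by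
        ext i j; simp [vecMulVec_apply]
      rw [hz2, add_zero, one_mul]
    · refine ⟨transv k a hka (d a) * u', mul_mem (transv_mem_elemGroup k a hka (d a)) hu', ?_⟩
      rw [Units.val_mul, hu'val, hsplit, transv_val, vmv_single_swap]

lemma row_unit_inv_val {u : (MM)ˣ} (k : Fin n) (d : Fin n → R) (hdk : d k = 0)
    (hval : u.val = 1 + vecMulVec (Pi.single k 1) d) :
    (u⁻¹).val = 1 - vecMulVec (Pi.single k 1) d := by
  have hXX : vecMulVec (Pi.single k 1 : Fin n → R) d *
      vecMulVec (Pi.single k 1 : Fin n → R) d = (0 : MM) := by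
    rw [vmv_mul_vmv, dot_single_one, hdk]
    exact vmv_zero_mid _ _
  have hmul : u.val * (1 - vecMulVec (Pi.single k 1) d) = 1 := by
    rw [hval]
    calc (1 + vecMulVec (Pi.single k 1) d) * (1 - vecMulVec (Pi.single k 1) d)
        = 1 - vecMulVec (Pi.single k 1 : Fin n → R) d *
            vecMulVec (Pi.single k 1 : Fin n → R) d := by noncomm_ring
      _ = 1 := by rw [hXX, sub_zero]
  exact Units.inv_eq_of_mul_eq_one_right hmul

end RelElemAux

namespace RelElemAux

open Matrix

variable {n : ℕ} {R : Type*} [Ring R] (I : TwoSidedIdeal R)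

local notation "MM" => Matrix (Fin n) (Fin n) R

lemma single_mul_right (k : Fin n) (x y : R) :
    (fun i => (Pi.single k x : Fin n → R) i * y) = (Pi.single k (x * y) : Fin n → R) := by
  funext i
  simp [Pi.single_apply, ite_mul]

lemma vmv_single_mul (k a b c : Fin n) (x y : R) :
    vecMulVec (Pi.single k x : Fin n → R) (Pi.single a 1) *
      vecMulVec (Pi.single b y : Fin n → R) (Pi.single c 1) =
    if a = b then vecMulVec (Pi.single k (x * y) : Fin n → R) (Pi.single c 1) else 0 := by
  rw [vmv_mul_vmv, dot_single]
  by_cases h : a = b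
  · rw [if_pos h, if_pos h, one_mul, single_mul_right]
  · rw [if_neg h, if_neg h]
    exact vmv_zero_mid _ _

lemma vmv_single_zero (a : Fin n) (d : Fin n → R) :
    vecMulVec (Pi.single a (0:R) : Fin n → R) d = (0 : MM) := by
  ext i j; simp [vecMulVec_apply, Pi.single_apply, ite_mul]

lemma vmv_single_neg (a : Fin n) (x : R) (d : Fin n → R) :
    vecMulVec (Pi.single a (-x) : Fin n → R) d =
      -vecMulVec (Pi.single a x : Fin n → R) d := by
  ext i j
  simp only [vecMulVec_apply, Pi.single_apply, Matrix.neg_apply]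
  split_ifs <;> simp

/-- The diagonal `1 + ρσ eₖₖ` piece, as a commutator, lies in `relElem`. -/
lemma diag_mem (k l : Fin n) (hlk : l ≠ k) (ρ σ : R) (hσ : σ ∈ I) (hσρ : σ * ρ = 0) :
    Mem1 I (1 + vecMulVec (Pi.single k (ρ * σ) : Fin n → R) (Pi.single k 1)) := by
  have hkl : k ≠ l := Ne.symm hlk
  set T1 : MM := vecMulVec (Pi.single k ρ) (Pi.single l 1) with hT1
  set T2 : MM := vecMulVec (Pi.single l σ) (Pi.single k 1) with hT2
  set P : MM := vecMulVec (Pi.single k (ρ * σ)) (Pi.single k 1) with hP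
  have h12 : T1 * T2 = P := by
    rw [hT1, hT2, hP, vmv_single_mul, if_pos rfl]
  have h11 : T1 * T1 = 0 := by
    rw [hT1, vmv_single_mul, if_neg hlk]
  have h21 : T2 * T1 = 0 := by
    rw [hT2, hT1, vmv_single_mul, if_pos rfl, hσρ, vmv_single_zero]
  have hP1 : P * T1 = 0 := by
    rw [hP, hT1, vmv_single_mul, if_pos rfl, mul_assoc, hσρ, mul_zero, vmv_single_zero]
  have h22 : T2 * T2 = 0 := by
    rw [hT2, vmv_single_mul, if_neg hkl]
  have hP2 : P * T2 = 0 := by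
    rw [hP, hT2, vmv_single_mul, if_neg hkl]
  have e1 : ((1 : MM) + T1) * (1 + T2) = 1 + T1 + T2 + P := by
    calc ((1 : MM) + T1) * (1 + T2) = 1 + T1 + T2 + T1 * T2 := by noncomm_ring
      _ = 1 + T1 + T2 + P := by rw [h12]
  have e2 : ((1 : MM) + T1 + T2 + P) * (1 + -T1) = 1 + T2 + P := by
    calc ((1 : MM) + T1 + T2 + P) * (1 + -T1)
        = 1 + T2 + P + (-(T1*T1) + -(T2*T1) + -(P*T1)) := by noncomm_ring
      _ = 1 + T2 + P := by rw [h11, h21, hP1]; simp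
  have e3 : ((1 : MM) + T2 + P) * (1 + -T2) = 1 + P := by
    calc ((1 : MM) + T2 + P) * (1 + -T2)
        = 1 + P + (-(T2*T2) + -(P*T2)) := by noncomm_ring
      _ = 1 + P := by rw [h22, hP2]; simp
  refine ⟨transv k l hkl ρ * transv l k hlk σ * (transv k l hkl ρ)⁻¹ * (transv l k hlk σ)⁻¹,
    ?_, ?_⟩
  · refine mul_mem ?_ (inv_mem (preElem_le_relElem I (transv_mem_preElem I l k hlk hσ)))
    have h := conjGen_mem_relElem I (τ := (transv k l hkl ρ)⁻¹)
      (inv_mem (transv_mem_elemGroup k l hkl ρ)) (transv_mem_preElem I l k hlk hσ)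
    rwa [inv_inv] at h
  · rw [Units.val_mul, Units.val_mul, Units.val_mul, transv_inv, transv_inv,
      transv_val, transv_val, transv_val, transv_val, vmv_single_neg, vmv_single_neg,
      ← hT1, ← hT2]
    rw [e1, e2, e3, hP]

/-- The corner lemma: `1 + (V σ) eₖ^T ∈ relElem` when `σ ∈ I` and `σ V k = 0`. -/
lemma corner (k l : Fin n) (hlk : l ≠ k) (V : Fin n → R) (σ : R) (hσ : σ ∈ I)
    (horth : σ * V k = 0) :
    Mem1 I (1 + vecMulVec (fun i => V i * σ) (Pi.single k 1)) := by
  classical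
  set c : Fin n → R := fun i => if i = k then 0 else V i * σ * (1 - V k * σ) with hc
  have hcmem : Mem1 I (1 + vecMulVec c (Pi.single k 1)) := by
    refine prod_col I k Finset.univ c (fun i hi => absurd (Finset.mem_univ i) hi) (by simp [hc]) ?_
    intro i
    show (if i = k then 0 else V i * σ * (1 - V k * σ)) ∈ I
    split_ifs
    · exact I.zero_mem
    · exact I.mul_mem_right _ _ (I.mul_mem_left _ _ hσ)
  have hdmem : Mem1 I (1 + vecMulVec (Pi.single k (V k * σ) : Fin n → R) (Pi.single k 1)) :=
    diag_mem I k l hlk (V k) σ hσ horth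
  have hVkσ : (V k * σ) * (V k * σ) = 0 := by
    have h0 : (V k * σ) * (V k * σ) = V k * (σ * V k) * σ := by noncomm_ring
    rw [h0, horth, mul_zero, zero_mul]
  have hck : c k = (0:R) := by simp [hc]
  have hcne : ∀ i, i ≠ k → c i = V i * σ * (1 - V k * σ) := by
    intro i h; simp [hc, h]
  have hcross : vecMulVec c (Pi.single k 1) *
      vecMulVec (Pi.single k (V k * σ) : Fin n → R) (Pi.single k 1)
      = vecMulVec (fun i => c i * (V k * σ)) (Pi.single k 1) := by
    rw [vmv_mul_vmv, single_one_dot, Pi.single_eq_same]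
  have hsum : vecMulVec c (Pi.single k 1) +
      vecMulVec (Pi.single k (V k * σ) : Fin n → R) (Pi.single k 1) +
      vecMulVec (fun i => c i * (V k * σ)) (Pi.single k 1)
      = vecMulVec (fun i => V i * σ) (Pi.single k 1) := by
    ext i j
    simp only [Matrix.add_apply, vecMulVec_apply]
    rcases eq_or_ne j k with hjk | hjk
    · rw [hjk, Pi.single_eq_same, mul_one, mul_one, mul_one, mul_one]
      rcases eq_or_ne i k with hik | hik
      · rw [hik, hck, Pi.single_eq_same]
        simp
      · rw [hcne i hik, Pi.single_eq_of_ne hik]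
        calc V i * σ * (1 - V k * σ) + 0 + V i * σ * (1 - V k * σ) * (V k * σ)
            = V i * σ * (1 - (V k * σ) * (V k * σ)) := by noncomm_ring
          _ = V i * σ := by rw [hVkσ, sub_zero, mul_one]
    · rw [Pi.single_eq_of_ne hjk, mul_zero, mul_zero, mul_zero, mul_zero]
      simp
  have hfact : (1 : MM) + vecMulVec (fun i => V i * σ) (Pi.single k 1) =
      (1 + vecMulVec c (Pi.single k 1)) *
        (1 + vecMulVec (Pi.single k (V k * σ) : Fin n → R) (Pi.single k 1)) := by
    calc (1 : MM) + vecMulVec (fun i => V i * σ) (Pi.single k 1)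
        = 1 + (vecMulVec c (Pi.single k 1) +
            vecMulVec (Pi.single k (V k * σ) : Fin n → R) (Pi.single k 1) +
            vecMulVec (fun i => c i * (V k * σ)) (Pi.single k 1)) := by rw [hsum]
      _ = 1 + (vecMulVec c (Pi.single k 1) +
            vecMulVec (Pi.single k (V k * σ) : Fin n → R) (Pi.single k 1) +
            vecMulVec c (Pi.single k 1) *
              vecMulVec (Pi.single k (V k * σ) : Fin n → R) (Pi.single k 1)) := by rw [hcross]
      _ = _ := by noncomm_ring
  rw [hfact]
  exact Mem1.mul I hcmem hdmem

end RelElemAux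

namespace RelElemAux

open Matrix

variable {n : ℕ} {R : Type*} [Ring R] (I : TwoSidedIdeal R)

local notation "MM" => Matrix (Fin n) (Fin n) R

lemma claim1 (v w : Fin n → R) (horth : w ⬝ᵥ v = 0) (k l : Fin n) (hlk : l ≠ k)
    (lam z : R) (hz : z ∈ I) (hsand : lam * w k * lam = lam) :
    Mem1 I (1 + vecMulVec (fun i => v i * (z * lam)) w) := by
  classical
  set ρ : Fin n → R := fun i => if i = k then 0 else -(lam * w i) with hρ
  have hρk : ρ k = 0 := by simp [hρ]
  set S : R := ρ ⬝ᵥ v with hS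
  set V : Fin n → R := fun i => v i - (Pi.single k 1 : Fin n → R) i * S with hV
  set σ : R := z * lam * w k with hσdef
  have hσI : σ ∈ I := I.mul_mem_right _ _ (I.mul_mem_right _ _ hz)
  have hlwS : lam * w k * S = -(lam * (w ⬝ᵥ v)) + lam * (w k * v k) := by
    rw [hS, dotProduct, Finset.mul_sum]
    have hterm : ∀ j : Fin n, lam * w k * (ρ j * v j)
        = (if j = k then 0 else -(lam * (w j * v j))) := by
      intro j
      rw [hρ]
      by_cases h : j = k
      · simp [h]
      · simp only [if_neg h]
        calc lam * w k * (-(lam * w j) * v j) = -((lam * w k * lam) * (w j * v j)) := by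
              noncomm_ring
          _ = -(lam * (w j * v j)) := by rw [hsand]
    rw [Finset.sum_congr rfl fun j _ => hterm j]
    have hsplit : ∀ j : Fin n, (if j = k then 0 else -(lam * (w j * v j)))
        = -(lam * (w j * v j)) + (if j = k then lam * (w j * v j) else 0) := by
      intro j; split_ifs <;> simp
    rw [Finset.sum_congr rfl fun j _ => hsplit j, Finset.sum_add_distrib,
      Finset.sum_ite_eq' Finset.univ k, if_pos (Finset.mem_univ k)]
    rw [dotProduct, Finset.mul_sum]
    simp
  have hVk : V k = v k - S := by rw [hV]; simp
  have hlwVk : lam * w k * V k = 0 := by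
    rw [hVk, mul_sub, hlwS, horth]
    have h2 : lam * (w k * v k) = lam * w k * v k := by rw [mul_assoc]
    simp [h2]
  have hσVk : σ * V k = 0 := by
    rw [hσdef]
    calc z * lam * w k * V k = z * (lam * w k * V k) := by noncomm_ring
      _ = 0 := by rw [hlwVk, mul_zero]
  set A : MM := vecMulVec (Pi.single k 1) ρ with hA
  set B : MM := vecMulVec (fun i => v i * (z * lam)) w with hB
  set K : MM := vecMulVec (fun i => V i * σ) (Pi.single k 1) with hK
  have hAA : A * A = 0 := by
    rw [hA, vmv_mul_vmv]
    have : ρ ⬝ᵥ (Pi.single k 1 : Fin n → R) = 0 := by rw [dot_single_one]; exact hρk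
    rw [this]
    exact vmv_zero_mid _ _
  have ht0 : ρ ⬝ᵥ (fun i => V i * σ) = S * σ := by
    have hpt : ∀ i, ρ i * (V i * σ) = (ρ i * v i) * σ := by
      intro i
      rcases eq_or_ne i k with h | h
      · rw [h, hρk]; simp
      · rw [hV]
        simp only [Pi.single_eq_of_ne h, zero_mul, sub_zero]
        rw [mul_assoc]
    rw [dotProduct, Finset.sum_congr rfl fun i _ => hpt i, ← Finset.sum_mul, hS, dotProduct]
  have hBA : B * A = vecMulVec (fun i => v i * (z * lam) * w k) ρ := by
    rw [hB, hA, vmv_mul_vmv]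
    rw [dot_single_one]
  have hAK : A * K = vecMulVec
      (fun i => (Pi.single k 1 : Fin n → R) i * (S * σ)) (Pi.single k 1) := by
    rw [hA, hK, vmv_mul_vmv, ht0]
  have hmain : B + B * A = K + A * K := by
    rw [hBA, hAK, hB, hK]
    ext i j
    simp only [Matrix.add_apply, vecMulVec_apply]
    rcases eq_or_ne j k with hjk | hjk
    · rw [hjk, hρk, mul_zero, add_zero, Pi.single_eq_same, mul_one, mul_one]
      rcases eq_or_ne i k with hik | hik
      · rw [hik, Pi.single_eq_same, one_mul, hVk, hσdef]
        noncomm_ring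
      · rw [Pi.single_eq_of_ne hik, zero_mul, add_zero, hV]
        simp only [Pi.single_eq_of_ne hik, zero_mul, sub_zero]
        rw [hσdef]
        noncomm_ring
    · rw [Pi.single_eq_of_ne hjk, mul_zero, mul_zero, add_zero]
      have hρj : ρ j = -(lam * w j) := by rw [hρ]; simp [hjk]
      rw [hρj]
      calc v i * (z * lam) * w j + v i * (z * lam) * w k * -(lam * w j)
          = v i * (z * (lam * w j)) - v i * (z * ((lam * w k * lam) * w j)) := by noncomm_ring
        _ = 0 := by rw [hsand]; noncomm_ring
  have hP2 : ((1 : MM) + B) * (1 + A) = (1 + A) * (1 + K) := by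
    calc ((1 : MM) + B) * (1 + A) = 1 + A + (B + B * A) := by noncomm_ring
      _ = 1 + A + (K + A * K) := by rw [hmain]
      _ = (1 + A) * (1 + K) := by noncomm_ring
  obtain ⟨uA, huA, huAval⟩ := prod_row k Finset.univ ρ (fun i hi => absurd (Finset.mem_univ i) hi) hρk
  have huAinv : (uA⁻¹).val = 1 - A := by
    rw [hA]
    exact row_unit_inv_val k ρ hρk huAval
  obtain ⟨uK, huK, huKval⟩ := corner I k l hlk V σ hσI hσVk
  refine ⟨uA * uK * uA⁻¹, ?_, ?_⟩
  · have h := relElem_conj I (τ := uA⁻¹) (inv_mem huA) huK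
    rwa [inv_inv] at h
  · rw [Units.val_mul, Units.val_mul, huAval, huKval, huAinv]
    have h1 : ((1 : MM) + A) * (1 - A) = 1 := by
      calc ((1 : MM) + A) * (1 - A) = 1 - A * A := by noncomm_ring
        _ = 1 := by rw [hAA, sub_zero]
    have hvalA : (1 : MM) + vecMulVec (Pi.single k 1) ρ = 1 + A := by rw [hA]
    have hvalK : (1 : MM) + vecMulVec (fun i => V i * σ) (Pi.single k 1) = 1 + K := by rw [hK]
    rw [hvalA, hvalK]
    calc ((1 : MM) + A) * (1 + K) * (1 - A) = ((1 : MM) + B) * (1 + A) * (1 - A) := by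
          rw [← hP2]
      _ = ((1 : MM) + B) * (((1 : MM) + A) * (1 - A)) := by rw [mul_assoc]
      _ = 1 + B := by rw [h1, mul_one]

end RelElemAux

namespace RelElemAux

open Matrix

variable {n : ℕ} {R : Type*} [Ring R] (I : TwoSidedIdeal R)

local notation "MM" => Matrix (Fin n) (Fin n) R

lemma h_mul (v w : Fin n → R) (horth : w ⬝ᵥ v = 0) (α β : R) :
    ((1 : MM) + vecMulVec (fun i => v i * α) w) * (1 + vecMulVec (fun i => v i * β) w)
      = 1 + vecMulVec (fun i => v i * (α + β)) w := by
  have hcross : vecMulVec (fun i => v i * α) w * vecMulVec (fun i => v i * β) w = (0 : MM) := by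
    rw [vmv_mul_vmv]
    have hd : w ⬝ᵥ (fun i => v i * β) = 0 := by rw [dot_mul_right, horth, zero_mul]
    rw [hd]
    exact vmv_zero_mid _ _
  have hadd : vecMulVec (fun i => v i * α) w + vecMulVec (fun i => v i * β) w
      = vecMulVec (fun i => v i * (α + β)) w := by
    ext i j
    simp only [Matrix.add_apply, vecMulVec_apply, mul_add, add_mul]
  calc ((1 : MM) + vecMulVec (fun i => v i * α) w) * (1 + vecMulVec (fun i => v i * β) w)
      = 1 + (vecMulVec (fun i => v i * α) w + vecMulVec (fun i => v i * β) w)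
        + vecMulVec (fun i => v i * α) w * vecMulVec (fun i => v i * β) w := by noncomm_ring
    _ = 1 + vecMulVec (fun i => v i * (α + β)) w := by rw [hcross, hadd, add_zero]

lemma coverage (hEx : IsExchangeRing R) (v w : Fin n → R) (horth : w ⬝ᵥ v = 0)
    (hl : ∀ k : Fin n, ∃ l, l ≠ k) (m : ℕ) :
    ∀ (L : List ((Fin n) × R)), L.length = m → ∀ f : R, f * f = f →
      (L.map fun p => f * w p.1 * p.2 * f).sum = f →
      ∀ y, y ∈ I → Mem1 I (1 + vecMulVec (fun i => v i * (y * f)) w) := by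
  induction m with
  | zero =>
    intro L hL f hff hsum y hy
    rw [List.length_eq_zero_iff] at hL
    subst hL
    simp only [List.map_nil, List.sum_nil] at hsum
    rw [← hsum, mul_zero, vmv_zero_mid, add_zero]
    exact Mem1.one I
  | succ m ih =>
    intro L hL f hff hsum y hy
    obtain ⟨hd, tl, rfl⟩ : ∃ hd tl, L = hd :: tl := by
      cases L with
      | nil => simp at hL
      | cons a l => exact ⟨a, l, rfl⟩
    obtain ⟨k₁, b₁⟩ := hd
    have htl : tl.length = m := by simpa using hL
    simp only [List.map_cons, List.sum_cons] at hsum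
    set T : R := (tl.map fun p => f * w p.1 * p.2 * f).sum with hT
    set x : R := f * w k₁ * b₁ * f + (1 - f) with hx
    obtain ⟨e, r, s, hee, her, hes⟩ := hEx x
    have hTeq : T = f - f * w k₁ * b₁ * f := eq_sub_of_add_eq' hsum
    have h1x : 1 - x = T := by rw [hx, hTeq]; abel
    have hf1f : (1 - f) * f = 0 := by rw [sub_mul, one_mul, hff, sub_self]
    have h1fT : (1 - f) * T = 0 := by
      have h2 : (1 - f) * (f * w k₁ * b₁ * f) = ((1 - f) * f) * (w k₁ * b₁ * f) := by
        noncomm_ring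
      rw [hTeq, mul_sub, h2, hf1f, zero_mul, sub_zero]
    have h1f1e : (1 - f) * (1 - e) = 0 := by
      rw [hes, ← mul_assoc, h1x, h1fT, zero_mul]
    have hfe1 : f * (1 - e) = 1 - e := by
      have h := h1f1e
      rw [sub_mul, one_mul] at h
      exact (sub_eq_zero.mp h).symm
    have h1fe : (1 - f) * e = 1 - f := by
      have h := h1f1e
      rw [mul_sub, mul_one] at h
      exact (sub_eq_zero.mp h).symm
    set f' : R := (1 - e) * f with hf'
    have h1e1e : (1 - e) * (1 - e) = 1 - e := by
      have h : (1 - e) * (1 - e) = 1 - e - e + e * e := by noncomm_ring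
      rw [h, hee]; abel
    have hf'f' : f' * f' = f' := by
      rw [hf']
      calc (1 - e) * f * ((1 - e) * f) = (1 - e) * (f * (1 - e)) * f := by noncomm_ring
        _ = (1 - e) * (1 - e) * f := by rw [hfe1]
        _ = (1 - e) * f := by rw [h1e1e]
    have hf'f : f' * f = f' := by
      rw [hf', mul_assoc, hff]
    have hff' : f * f' = f' := by
      rw [hf', ← mul_assoc, hfe1]
    set p₁ : R := e * f with hp₁
    have hfef : f * e * f = e * f := by
      have hfe2 : f * e = e - (1 - f) := by
        have h4 : f * e = e - (1 - f) * e := by noncomm_ring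
        rw [h4, h1fe]
      rw [hfe2, sub_mul, hf1f, sub_zero]
    set c₁ : R := b₁ * f * r * f with hc₁
    have hfx : f * x = f * w k₁ * b₁ * f := by
      rw [hx, mul_add]
      have h3 : f * (1 - f) = 0 := by rw [mul_sub, mul_one, hff, sub_self]
      rw [h3, add_zero]
      calc f * (f * w k₁ * b₁ * f) = (f * f) * (w k₁ * b₁ * f) := by noncomm_ring
        _ = f * w k₁ * b₁ * f := by rw [hff]; noncomm_ring
    have hp1wc : p₁ = f * w k₁ * c₁ := by
      rw [hp₁, ← hfef, her, hc₁]
      calc f * (x * r) * f = (f * x) * (r * f) := by noncomm_ring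
        _ = (f * w k₁ * b₁ * f) * (r * f) := by rw [hfx]
        _ = f * w k₁ * (b₁ * f * r * f) := by noncomm_ring
    have hp1p1 : p₁ * p₁ = p₁ := by
      rw [hp₁]
      calc e * f * (e * f) = e * (f * e * f) := by noncomm_ring
        _ = e * (e * f) := by rw [hfef]
        _ = (e * e) * f := by noncomm_ring
        _ = e * f := by rw [hee]
    have hp1f : p₁ * f = p₁ := by
      rw [hp₁, mul_assoc, hff]
    have hsplitf : p₁ + f' = f := by
      rw [hp₁, hf']; noncomm_ring
    have hf'Tsf : f' = T * s * f := by
      rw [hf', hes, h1x]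
    have hTsf' : (T * s) * f' = f' := by
      calc (T * s) * f' = (T * s) * (f * f') := by rw [hff']
        _ = ((T * s) * f) * f' := by noncomm_ring
        _ = f' * f' := by rw [← hf'Tsf]
        _ = f' := hf'f'
    have hsum' : ((tl.map fun p : (Fin n) × R => (p.1, p.2 * (f * s))).map
        (fun p : (Fin n) × R => f' * w p.1 * p.2 * f')).sum = f' := by
      rw [List.map_map]
      have hfun : ((fun p : (Fin n) × R => f' * w p.1 * p.2 * f') ∘
          fun p : (Fin n) × R => (p.1, p.2 * (f * s)))
          = fun p : (Fin n) × R => f' * ((f * w p.1 * p.2 * f) * (s * f')) := by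
        funext p
        simp only [Function.comp_apply]
        calc f' * w p.1 * (p.2 * (f * s)) * f'
            = f' * w p.1 * p.2 * (f * (s * f')) := by noncomm_ring
          _ = f' * ((f * w p.1 * p.2 * f) * (s * f')) := by
              have h7 : f' * ((f * w p.1 * p.2 * f) * (s * f'))
                  = (f' * f) * w p.1 * p.2 * (f * (s * f')) := by noncomm_ring
              rw [h7, hf'f]
      rw [hfun]
      have hstep : (tl.map fun p : (Fin n) × R =>
          f' * ((f * w p.1 * p.2 * f) * (s * f'))).sum
          = f' * ((tl.map fun p : (Fin n) × R => (f * w p.1 * p.2 * f) * (s * f')).sum) :=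
        List.sum_map_mul_left tl _ f'
      rw [hstep, List.sum_map_mul_right, ← hT]
      calc f' * (T * (s * f')) = f' * ((T * s) * f') := by noncomm_ring
        _ = f' * f' := by rw [hTsf']
        _ = f' := hf'f'
    have hih : Mem1 I (1 + vecMulVec (fun i => v i * (y * f')) w) := by
      refine ih (tl.map fun p : (Fin n) × R => (p.1, p.2 * (f * s))) ?_ f' hf'f' hsum' y hy
      simpa using htl
    set lam₁ : R := c₁ * p₁ * f with hlam
    set z : R := y * (f * w k₁) with hz
    have hzI : z ∈ I := I.mul_mem_right _ _ hy
    have hsand : lam₁ * w k₁ * lam₁ = lam₁ := by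
      rw [hlam]
      calc c₁ * p₁ * f * w k₁ * (c₁ * p₁ * f)
          = c₁ * (p₁ * (f * w k₁ * c₁) * p₁) * f := by noncomm_ring
        _ = c₁ * (p₁ * p₁ * p₁) * f := by rw [← hp1wc]
        _ = c₁ * p₁ * f := by rw [hp1p1, hp1p1]
    have hzlam : z * lam₁ = y * p₁ := by
      rw [hz, hlam]
      calc y * (f * w k₁) * (c₁ * p₁ * f) = y * ((f * w k₁ * c₁) * p₁ * f) := by noncomm_ring
        _ = y * (p₁ * p₁ * f) := by rw [← hp1wc]
        _ = y * (p₁ * f) := by rw [hp1p1]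
        _ = y * p₁ := by rw [hp1f]
    obtain ⟨l, hlk⟩ := hl k₁
    have hpiece : Mem1 I (1 + vecMulVec (fun i => v i * (y * p₁)) w) := by
      have h := claim1 I v w horth k₁ l hlk lam₁ z hzI hsand
      rwa [hzlam] at h
    have hcomb := Mem1.mul I hpiece hih
    rw [h_mul v w horth (y * p₁) (y * f')] at hcomb
    have hyf : y * p₁ + y * f' = y * f := by rw [← mul_add, hsplitf]
    rwa [hyf] at hcomb

end RelElemAux
namespace RelElemAux
open Matrix
variable {n : ℕ} {R : Type*} [Ring R] (I : TwoSidedIdeal R)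
local notation "MM" => Matrix (Fin n) (Fin n) R

lemma mul_vmv (A : MM) (b c : Fin n → R) :
    A * vecMulVec b c = vecMulVec (A.mulVec b) c := by
  ext i j
  simp only [Matrix.mul_apply, vecMulVec_apply, Matrix.mulVec, dotProduct, Finset.sum_mul]
  exact Finset.sum_congr rfl fun k _ => by noncomm_ring

lemma vmv_mul_mat (b c : Fin n → R) (A : MM) :
    vecMulVec b c * A = vecMulVec b (Matrix.vecMul c A) := by
  ext i j
  simp only [Matrix.mul_apply, vecMulVec_apply, Matrix.vecMul, dotProduct, Finset.mul_sum]
  exact Finset.sum_congr rfl fun k _ => by noncomm_ring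

set_option maxHeartbeats 1000000 in
lemma main3 (hEx : IsExchangeRing R) (g : (MM)ˣ) (i j : Fin n) (hij : i ≠ j)
    (x : R) (hx : x ∈ I) : g⁻¹ * transv i j hij x * g ∈ relElem n R I := by
  classical
  set v : Fin n → R := fun a => (g⁻¹).val a i with hv
  set w : Fin n → R := fun b => g.val j b with hw
  have hgginv : g.val * (g⁻¹).val = 1 := by
    rw [← Units.val_mul]; simp
  have hinvg : (g⁻¹).val * g.val = 1 := by
    rw [← Units.val_mul]; simp
  have horth : w ⬝ᵥ v = 0 := by
    have h1 : (g.val * (g⁻¹).val) j i = (0 : R) := by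
      rw [hgginv]
      exact Matrix.one_apply_ne (Ne.symm hij)
    rw [Matrix.mul_apply] at h1
    exact h1
  have hsum1 : ((List.ofFn fun k : Fin n => ((k : Fin n), (g⁻¹).val k j)).map
      (fun p => (1:R) * w p.1 * p.2 * 1)).sum = 1 := by
    rw [List.map_ofFn, List.sum_ofFn]
    have h1 : (g.val * (g⁻¹).val) j j = (1 : R) := by
      rw [hgginv]
      exact Matrix.one_apply_eq j
    rw [Matrix.mul_apply] at h1
    simp only [Function.comp_apply, one_mul, mul_one]
    exact h1
  have hl : ∀ k : Fin n, ∃ l : Fin n, l ≠ k := by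
    intro k
    rcases eq_or_ne k i with h | h
    · exact ⟨j, by rw [h]; exact Ne.symm hij⟩
    · exact ⟨i, Ne.symm h⟩
  have hcov := coverage I hEx v w horth hl n
    (List.ofFn fun k : Fin n => ((k : Fin n), (g⁻¹).val k j)) List.length_ofFn
    1 (one_mul 1) hsum1 x hx
  obtain ⟨u, hu, huval⟩ := hcov
  have hval : (g⁻¹ * transv i j hij x * g).val
      = 1 + vecMulVec (fun a => v a * (x * 1)) w := by
    rw [Units.val_mul, Units.val_mul, transv_val]
    calc (g⁻¹).val * (1 + vecMulVec (Pi.single i x) (Pi.single j 1)) * g.val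
        = (g⁻¹).val * g.val
          + (g⁻¹).val * vecMulVec (Pi.single i x) (Pi.single j 1) * g.val := by noncomm_ring
      _ = 1 + vecMulVec (fun a => v a * (x * 1)) w := by
          rw [hinvg, mul_vmv, vmv_mul_mat, Matrix.mulVec_single, Matrix.single_vecMul]
          congr 1
          ext a b
          rw [vecMulVec_apply, vecMulVec_apply, hv, hw]
          simp [Matrix.col_apply, Matrix.row_apply, mul_assoc]
  have heq : g⁻¹ * transv i j hij x * g = u := Units.ext (by rw [hval, huval])
  rw [heq]
  exact hu

set_option maxHeartbeats 1000000 in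
lemma main2 (hEx : IsExchangeRing R) (G : (MM)ˣ) {ε : (MM)ˣ} (hε : ε ∈ preElem n R I) :
    G⁻¹ * ε * G ∈ relElem n R I := by
  have hle : preElem n R I ≤
      Subgroup.comap ((MulAut.conj G⁻¹).toMonoidHom) (relElem n R I) := by
    refine (Subgroup.closure_le _).mpr ?_
    rintro u ⟨i, j, hij, x, hx, rfl⟩
    simp only [SetLike.mem_coe, Subgroup.mem_comap, MulEquiv.coe_toMonoidHom,
      MulAut.conj_apply, inv_inv]
    exact main3 I hEx G i j hij x hx
  have h := hle hε
  simpa [Subgroup.mem_comap, MulAut.conj_apply] using h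

end RelElemAux

theorem relElem_normal {n : ℕ} (R : Type*) [Ring R] (hR : IsExchangeRing R) (hn : 1 ≤ n)
    (I : TwoSidedIdeal R) : (relElem n R I).Normal := by
  constructor
  intro u hu g
  have hle : relElem n R I ≤
      Subgroup.comap ((MulAut.conj g).toMonoidHom) (relElem n R I) := by
    refine (Subgroup.closure_le _).mpr ?_
    rintro u' ⟨τ, hτ, ε, hε, rfl⟩
    simp only [SetLike.mem_coe, Subgroup.mem_comap, MulEquiv.coe_toMonoidHom,
      MulAut.conj_apply]
    have hrw : g * (τ⁻¹ * ε * τ) * g⁻¹ = (τ * g⁻¹)⁻¹ * ε * (τ * g⁻¹) := by group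
    rw [hrw]
    exact RelElemAux.main2 I hR (τ * g⁻¹) hε
  have h := hle hu
  simpa [Subgroup.mem_comap, MulAut.conj_apply] using h
end

section
/- Let R be an exchange ring and n ≥ 1 a positive integer. Then for any twosided ideal I of R, the commutator subgroup [E_n(R), C_n(R,I)] is contained in E_n(R,I). -/
open Matrix

section RingLemmas
variable {R : Type*} [Ring R]


/-- Corner version of the exchange/suitable property. -/
lemma cornerSuit (hR : IsExchangeRing R) (f x : R) (hf : f * f = f)
    (h1 : f * x = x) (h2 : x * f = x) :
    ∃ η t s : R, η * η = η ∧ η = x * t ∧ f - η = (f - x) * s ∧ f * η = η ∧ η * f = η := by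
  obtain ⟨e, r, s, he, her, hes⟩ := hR (x + 1 - f)
  have hyz : (1 : R) - (x + 1 - f) = f - x := by noncomm_ring
  rw [hyz] at hes
  have hkey : ((1 : R) - f) * (f - x) = 0 := by
    have h3 : ((1 : R) - f) * (f - x) = f - x - f * f + f * x := by noncomm_ring
    rw [h3, hf, h1]; abel
  have hA : ((1 : R) - f) * ((1 : R) - e) = 0 := by
    rw [hes, ← mul_assoc, hkey, zero_mul]
  have hfe : f * ((1 : R) - e) = 1 - e := by
    have h0 : ((1 : R) - e) - f * (1 - e) = (1 - f) * (1 - e) := by noncomm_ring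
    rw [hA] at h0
    have := sub_eq_zero.mp h0
    exact this.symm
  set μ := ((1 : R) - e) * f with hμ
  have hee : ((1 : R) - e) * ((1 : R) - e) = 1 - e := by
    have h4 : ((1 : R) - e) * ((1 : R) - e) = 1 - e - e + e * e := by noncomm_ring
    rw [h4, he]; abel
  have hμμ : μ * μ = μ := by
    rw [hμ]
    calc ((1 : R) - e) * f * (((1 : R) - e) * f) = (1 - e) * (f * (1 - e)) * f := by
          noncomm_ring
    _ = (1 - e) * (1 - e) * f := by rw [hfe]
    _ = ((1:R) - e) * f := by rw [hee]
  have hfμ : f * μ = μ := by rw [hμ, ← mul_assoc, hfe]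
  have hμf : μ * f = μ := by rw [hμ, mul_assoc, hf]
  refine ⟨f - μ, r * f, s * f, ?_, ?_, ?_, ?_, ?_⟩
  · calc (f - μ) * (f - μ) = f * f - f * μ - μ * f + μ * μ := by noncomm_ring
    _ = f - μ - μ + μ := by rw [hf, hfμ, hμf, hμμ]
    _ = f - μ := by abel
  · -- f - μ = x * (r * f)
    have hfy : f * (x + 1 - f) = x := by
      have h5 : f * (x + 1 - f) = f * x + f - f * f := by noncomm_ring
      rw [h5, hf, h1]; abel
    have hfe2 : f * e = x * r := by
      calc f * e = f * ((x + 1 - f) * r) := by rw [← her]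
      _ = f * (x + 1 - f) * r := by rw [mul_assoc]
      _ = x * r := by rw [hfy]
    have h6 : f - μ = e * f := by
      rw [hμ]; noncomm_ring
    have h7 : f * (f - μ) = f - μ := by
      calc f * (f - μ) = f * f - f * μ := by noncomm_ring
      _ = f - μ := by rw [hf, hfμ]
    calc f - μ = f * (f - μ) := h7.symm
    _ = f * (e * f) := by rw [h6]
    _ = f * e * f := by rw [mul_assoc]
    _ = x * r * f := by rw [hfe2]
    _ = x * (r * f) := by rw [mul_assoc]
  · rw [sub_sub_cancel, hμ, hes, mul_assoc]
  · calc f * (f - μ) = f * f - f * μ := by noncomm_ring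
    _ = f - μ := by rw [hf, hfμ]
  · calc (f - μ) * f = f * f - μ * f := by noncomm_ring
    _ = f - μ := by rw [hf, hμf]

/-- Complete orthogonal families of idempotents subordinate to a decomposition of an
idempotent `f` as a sum, in an exchange ring. -/
lemma orthoFam (hR : IsExchangeRing R) :
    ∀ (m : ℕ) (f : R), f * f = f → ∀ (a : Fin m → R),
    (∀ k, f * a k = a k) → (∀ k, a k * f = a k) → (∑ k, a k) = f →
    ∃ h : Fin m → R, (∀ k, h k * h k = h k) ∧ (∀ k, ∃ c, h k = a k * c) ∧
      (∀ k l, k ≠ l → h k * h l = 0) ∧ (∑ k, h k) = f := by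
  intro m
  induction m with
  | zero =>
    intro f hf a _ _ hsum
    refine ⟨(fun k => 0), ?_, ?_, ?_, ?_⟩ <;> simp_all
  | succ m ih =>
    intro f hf a hfa haf hsum
    obtain ⟨η, t₀, st, hη, hηa, hfη', hfη, hηf⟩ :=
      cornerSuit hR f (a 0) hf (hfa 0) (haf 0)
    set f' := f - η with hf'
    have hf'2 : f' * f' = f' := by
      have h7 : f' * f' = f * f - f * η - η * f + η * η := by rw [hf']; noncomm_ring
      rw [h7, hf, hfη, hηf, hη, hf']; abel
    have hff' : f * f' = f' := by
      rw [hf', mul_sub, hf, hfη]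
    have hf'f : f' * f = f' := by
      rw [hf', sub_mul, hf, hηf]
    have hrest : (∑ k : Fin m, a k.succ) = f - a 0 := by
      rw [Fin.sum_univ_succ] at hsum
      have := hsum
      linear_combination (norm := abel) hsum
    set b : Fin m → R := fun k => a k.succ * st with hb
    have hbsum : (∑ k : Fin m, b k) = f' := by
      rw [hb]
      simp only
      rw [← Finset.sum_mul, hrest, ← hfη']
    have hfb : ∀ k, f * b k = b k := by
      intro k; rw [hb]; simp only; rw [← mul_assoc, hfa]
    set at' : Fin m → R := fun k => f' * b k * f' with hat
    have hat1 : ∀ k, f' * at' k = at' k := by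
      intro k; simp only [hat]; rw [← mul_assoc, ← mul_assoc, hf'2]
    have hat2 : ∀ k, at' k * f' = at' k := by
      intro k; simp only [hat]; rw [mul_assoc, mul_assoc, hf'2, ← mul_assoc]
    have hatsum : (∑ k, at' k) = f' := by
      simp only [hat]
      rw [← Finset.sum_mul, ← Finset.mul_sum, hbsum, hf'2, hf'2]
    obtain ⟨g, hg, hgc, hgo, hgsum⟩ := ih f' hf'2 at' hat1 hat2 hatsum
    have hgf' : ∀ k, g k * f' = g k := by
      intro k
      rw [← hgsum, Finset.mul_sum, Finset.sum_eq_single k]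
      · exact hg k
      · intro l _ hl; exact hgo k l (Ne.symm hl)
      · intro h; exact absurd (Finset.mem_univ k) h
    have hf'g : ∀ k, f' * g k = g k := by
      intro k
      rw [← hgsum, Finset.sum_mul, Finset.sum_eq_single k]
      · exact hg k
      · intro l _ hl; exact hgo l k hl
      · intro h; exact absurd (Finset.mem_univ k) h
    choose c hc using hgc
    set u : Fin m → R := fun k => b k * (f' * c k) with hu
    have hf'u : ∀ k, f' * u k = g k := by
      intro k
      rw [hu]; simp only
      rw [hc, hat]; simp only [mul_assoc]
    have hfu : ∀ k, f * u k = u k := by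
      intro k; rw [hu]; simp only; rw [← mul_assoc, hfb]
    set p : Fin m → R := fun k => u k * g k with hp
    have hgu : ∀ k l, g k * u l = if k = l then g k else 0 := by
      intro k l
      have h8 : g k * u l = g k * (f' * u l) := by
        conv_lhs => rw [← hgf' k]
        rw [mul_assoc]
      rw [h8, hf'u]
      by_cases h : k = l
      · subst h; simp [hg k]
      · simp [h, hgo k l h]
    have hpp : ∀ k, p k * p k = p k := by
      intro k
      rw [hp]; simp only
      calc u k * g k * (u k * g k) = u k * (g k * u k) * g k := by
            simp only [mul_assoc]
      _ = u k * g k * g k := by rw [hgu k k]; simp [mul_assoc]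
      _ = u k * g k := by rw [mul_assoc, hg]
    have hpo : ∀ k l, k ≠ l → p k * p l = 0 := by
      intro k l hkl
      rw [hp]; simp only
      calc u k * g k * (u l * g l) = u k * (g k * u l) * g l := by
            simp only [mul_assoc]
      _ = 0 := by rw [hgu k l]; simp [hkl]
    have hηf' : η * f' = 0 := by
      rw [hf', mul_sub, hηf, hη, sub_self]
    have hf'η : f' * η = 0 := by
      rw [hf', sub_mul, hfη, hη, sub_self]
    have hηg : ∀ k, η * g k = 0 := by
      intro k; rw [← hf'g k, ← mul_assoc, hηf', zero_mul]
    have hgη : ∀ k, g k * η = 0 := by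
      intro k; rw [← hgf' k, mul_assoc, hf'η, mul_zero]
    have hpη : ∀ k, p k * η = 0 := by
      intro k; rw [hp]; simp only; rw [mul_assoc, hgη, mul_zero]
    have hfp : ∀ k, f * p k = p k := by
      intro k; rw [hp]; simp only; rw [← mul_assoc, hfu]
    have hf'p : ∀ k, f' * p k = g k := by
      intro k; rw [hp]; simp only; rw [← mul_assoc, hf'u, hg]
    set s : R := 1 - ∑ k, p k with hs
    have hsη : s * η = η := by
      rw [hs, sub_mul, one_mul, Finset.sum_mul]
      have h9 : (∑ k, p k * η) = 0 := by
        apply Finset.sum_eq_zero; intro k _; exact hpη k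
      rw [h9, sub_zero]
    have hsp : ∀ k, s * p k = 0 := by
      intro k
      rw [hs, sub_mul, one_mul, Finset.sum_mul, Finset.sum_eq_single k]
      · rw [hpp, sub_self]
      · intro l _ hl; exact hpo l k hl
      · intro h; exact absurd (Finset.mem_univ k) h
    refine ⟨Fin.cons (η * s) p, ?_, ?_, ?_, ?_⟩
    · intro k
      induction k using Fin.cases with
      | zero =>
        simp only [Fin.cons_zero]
        calc η * s * (η * s) = η * (s * η) * s := by simp only [mul_assoc]
        _ = η * η * s := by rw [hsη]
        _ = η * s := by rw [hη]
      | succ k' => simp only [Fin.cons_succ]; exact hpp k'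
    · intro k
      induction k using Fin.cases with
      | zero =>
        refine ⟨t₀ * s, ?_⟩
        simp only [Fin.cons_zero]
        rw [hηa, mul_assoc]
      | succ k' =>
        refine ⟨st * (f' * c k' * g k'), ?_⟩
        simp only [Fin.cons_succ, hp, hu, hb]
        simp only [mul_assoc]
    · intro k l
      induction k using Fin.cases with
      | zero =>
        induction l using Fin.cases with
        | zero => intro h; exact absurd rfl h
        | succ l' =>
          intro _
          simp only [Fin.cons_zero, Fin.cons_succ]
          rw [mul_assoc, hsp, mul_zero]
      | succ k' =>
        induction l using Fin.cases with
        | zero =>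
          intro _
          simp only [Fin.cons_zero, Fin.cons_succ]
          rw [hp]; simp only
          rw [mul_assoc, ← mul_assoc (g k'), hgη, zero_mul, mul_zero]
        | succ l' =>
          intro h
          simp only [Fin.cons_succ]
          refine hpo k' l' ?_
          intro hc'; exact h (by rw [hc'])
    · rw [Fin.sum_univ_succ]
      simp only [Fin.cons_zero, Fin.cons_succ]
      have key : ∀ k, η * p k = p k - g k := by
        intro k
        have h10 : ((1 : R) - η) * p k = (1 - f) * p k + f' * p k := by
          rw [hf']; noncomm_ring
        have h11 : ((1 : R) - f) * p k = 0 := by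
          rw [sub_mul, one_mul, hfp, sub_self]
        rw [h11, zero_add, hf'p] at h10
        have h12 : p k - η * p k = g k := by
          calc p k - η * p k = (1 - η) * p k := by noncomm_ring
          _ = g k := h10
        linear_combination (norm := abel) -h12
      have h13 : η * s = η - ∑ k, η * p k := by
        rw [hs, mul_sub, mul_one, Finset.mul_sum]
      rw [h13]
      have h14 : (∑ k, η * p k) = (∑ k : Fin m, p k) - ∑ k, g k := by
        rw [← Finset.sum_sub_distrib]
        apply Finset.sum_congr rfl
        intro k _; exact key k
      rw [h14, hgsum, hf']
      abel

end RingLemmas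
section MatrixLayer
variable {n : ℕ} {R : Type*} [Ring R]

lemma vmv_mul_vmv (c q c' q' : Fin n → R) :
    vecMulVec c q * vecMulVec c' q' = vecMulVec c (fun b => (q ⬝ᵥ c') * q' b) := by
  ext a b
  simp only [Matrix.mul_apply, vecMulVec_apply, dotProduct, Finset.sum_mul, Finset.mul_sum]
  apply Finset.sum_congr rfl
  intro m _
  noncomm_ring

lemma mul_vmv (M : Matrix (Fin n) (Fin n) R) (c q : Fin n → R) :
    M * vecMulVec c q = vecMulVec (M *ᵥ c) q := by
  ext a b
  simp only [Matrix.mul_apply, vecMulVec_apply, Matrix.mulVec, dotProduct, Finset.sum_mul]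
  apply Finset.sum_congr rfl
  intro m _
  noncomm_ring

lemma vmv_mul (c q : Fin n → R) (M : Matrix (Fin n) (Fin n) R) :
    vecMulVec c q * M = vecMulVec c (q ᵥ* M) := by
  ext a b
  simp only [Matrix.mul_apply, vecMulVec_apply, Matrix.vecMul, dotProduct, Finset.mul_sum]
  apply Finset.sum_congr rfl
  intro m _
  noncomm_ring

/-- The unit `1 + M` for a square-zero `M`. -/
def nilU (M : Matrix (Fin n) (Fin n) R) (h : M * M = 0) : (Matrix (Fin n) (Fin n) R)ˣ :=
  ⟨1 + M, 1 - M,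
    by rw [show ((1:Matrix (Fin n) (Fin n) R) + M) * (1 - M) = 1 - M * M by noncomm_ring, h,
      sub_zero],
    by rw [show ((1:Matrix (Fin n) (Fin n) R) - M) * (1 + M) = 1 - M * M by noncomm_ring, h,
      sub_zero]⟩

@[simp] lemma nilU_val (M : Matrix (Fin n) (Fin n) R) (h) : (nilU M h).val = 1 + M := rfl
@[simp] lemma nilU_inv_val (M : Matrix (Fin n) (Fin n) R) (h) : ((nilU M h)⁻¹).val = 1 - M := rfl

/-- The unit `1 + c ⬝ qᵀ` where `q ⬝ᵥ c = 0`. -/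
def elemU (c q : Fin n → R) (h : q ⬝ᵥ c = 0) : (Matrix (Fin n) (Fin n) R)ˣ :=
  nilU (vecMulVec c q)
    (by rw [vmv_mul_vmv, h]
        ext a b; simp [vecMulVec_apply])

@[simp] lemma elemU_val (c q : Fin n → R) (h) : (elemU c q h).val = 1 + vecMulVec c q := rfl
@[simp] lemma elemU_inv_val (c q : Fin n → R) (h) :
    ((elemU c q h)⁻¹).val = 1 - vecMulVec c q := rfl

lemma stdBasisMatrix_eq_vmv (i j : Fin n) (x : R) :
    Matrix.single i j x = vecMulVec (Pi.single i 1) (Pi.single j x) := by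
  ext a b
  by_cases hai : a = i
  · subst hai
    by_cases hbj : b = j
    · subst hbj
      simp [vecMulVec_apply, Matrix.single, Matrix.of_apply]
    · simp [vecMulVec_apply, Pi.single_apply, hbj, Matrix.single, Matrix.of_apply,
        show ¬ j = b from fun h => hbj h.symm]
  · simp [vecMulVec_apply, Pi.single_apply, hai, Matrix.single, Matrix.of_apply,
      show ¬ i = a from fun h => hai h.symm]

lemma single_dot_single (l m : Fin n) (hlm : l ≠ m) (x y : R) :
    Pi.single m x ⬝ᵥ Pi.single l y = 0 := by
  rw [single_dotProduct, Pi.single_apply, if_neg (by exact fun h => hlm h.symm), mul_zero]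

lemma transv_eq_elemU (i j : Fin n) (hij : i ≠ j) (x : R) :
    transv i j hij x = elemU (Pi.single i 1) (Pi.single j x)
      (single_dot_single i j hij x 1) := by
  apply Units.ext
  show (1 : Matrix (Fin n) (Fin n) R) + Matrix.single i j x = 1 + _
  rw [stdBasisMatrix_eq_vmv]

lemma elemU_congr (c q q' : Fin n → R) (h : q ⬝ᵥ c = 0) (hq : q = q') :
    elemU c q h = elemU c q' (hq ▸ h) := by
  subst hq; rfl

lemma elemU_congr_left (c c' q : Fin n → R) (h : q ⬝ᵥ c = 0) (hc : c = c') :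
    elemU c q h = elemU c' q (hc ▸ h) := by
  subst hc; rfl

lemma elemU_add_right (c q1 q2 : Fin n → R) (h1 : q1 ⬝ᵥ c = 0) (h2 : q2 ⬝ᵥ c = 0) :
    elemU c (q1 + q2) (by rw [add_dotProduct, h1, h2, add_zero]) =
      elemU c q1 h1 * elemU c q2 h2 := by
  apply Units.ext
  show (1 : Matrix (Fin n) (Fin n) R) + _ = (1 + vecMulVec c q1) * (1 + vecMulVec c q2)
  have hcross : vecMulVec c q1 * vecMulVec c q2 = 0 := by
    rw [vmv_mul_vmv, h1]
    ext a b; simp [vecMulVec_apply]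
  have expand : ((1:Matrix (Fin n) (Fin n) R) + vecMulVec c q1) * (1 + vecMulVec c q2) =
      1 + vecMulVec c q1 + vecMulVec c q2 + vecMulVec c q1 * vecMulVec c q2 := by noncomm_ring
  rw [expand, hcross, add_zero]
  have : vecMulVec c (q1 + q2) = vecMulVec c q1 + vecMulVec c q2 := by
    ext a b; simp [vecMulVec_apply, mul_add]
  rw [this, add_assoc]

lemma elemU_add_left (c1 c2 q : Fin n → R) (h1 : q ⬝ᵥ c1 = 0) (h2 : q ⬝ᵥ c2 = 0) :
    elemU (c1 + c2) q (by rw [dotProduct_add, h1, h2, add_zero]) =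
      elemU c1 q h1 * elemU c2 q h2 := by
  apply Units.ext
  show (1 : Matrix (Fin n) (Fin n) R) + _ = (1 + vecMulVec c1 q) * (1 + vecMulVec c2 q)
  have hcross : vecMulVec c1 q * vecMulVec c2 q = 0 := by
    rw [vmv_mul_vmv, h2]
    ext a b; simp [vecMulVec_apply]
  have expand : ((1:Matrix (Fin n) (Fin n) R) + vecMulVec c1 q) * (1 + vecMulVec c2 q) =
      1 + vecMulVec c1 q + vecMulVec c2 q + vecMulVec c1 q * vecMulVec c2 q := by noncomm_ring
  rw [expand, hcross, add_zero]
  have : vecMulVec (c1 + c2) q = vecMulVec c1 q + vecMulVec c2 q := by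
    ext a b; simp [vecMulVec_apply, add_mul]
  rw [this, add_assoc]

end MatrixLayer
section Membership
variable {n : ℕ} {R : Type*} [Ring R] {I : TwoSidedIdeal R}

lemma vmv_single_single (i j : Fin n) (x y : R) :
    vecMulVec (Pi.single i x) (Pi.single j y) = Matrix.single i j (x * y) := by
  ext a b
  by_cases hai : a = i
  · subst hai
    by_cases hbj : b = j
    · subst hbj
      simp [vecMulVec_apply, Matrix.single, Matrix.of_apply]
    · simp [vecMulVec_apply, Pi.single_apply, hbj, Matrix.single, Matrix.of_apply,
        show ¬ j = b from fun h => hbj h.symm]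
  · simp [vecMulVec_apply, Pi.single_apply, hai, Matrix.single, Matrix.of_apply,
      show ¬ i = a from fun h => hai h.symm]

lemma elemU_eq_transv (m l : Fin n) (hml : m ≠ l) (y : R) (h) :
    elemU (Pi.single m y) (Pi.single l 1) h = transv m l hml y := by
  apply Units.ext
  show (1:Matrix (Fin n) (Fin n) R) + _ = 1 + Matrix.single m l y
  rw [vmv_single_single, mul_one]

lemma elemU_eq_transv' (l m : Fin n) (hlm : l ≠ m) (y : R) (h) :
    elemU (Pi.single l 1) (Pi.single m y) h = transv l m hlm y := by
  apply Units.ext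
  show (1:Matrix (Fin n) (Fin n) R) + _ = 1 + Matrix.single l m y
  rw [vmv_single_single, one_mul]

lemma transv_mem_elem (i j : Fin n) (hij : i ≠ j) (x : R) :
    transv i j hij x ∈ elemGroup n R :=
  Subgroup.subset_closure ⟨i, j, hij, x, rfl⟩

lemma transv_mem_pre (i j : Fin n) (hij : i ≠ j) (x : R) (hx : x ∈ I) :
    transv i j hij x ∈ preElem n R I :=
  Subgroup.subset_closure ⟨i, j, hij, x, hx, rfl⟩

lemma preElem_le_relElem : preElem n R I ≤ relElem n R I := by
  intro g hg
  exact Subgroup.subset_closure ⟨1, one_mem _, g, hg, by group⟩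

lemma conj_mem_relElem {τ d : (Matrix (Fin n) (Fin n) R)ˣ} (hτ : τ ∈ elemGroup n R)
    (hd : d ∈ relElem n R I) : τ * d * τ⁻¹ ∈ relElem n R I := by
  induction hd using Subgroup.closure_induction with
  | mem g hg =>
    obtain ⟨σ, hσ, ε, hε, rfl⟩ := hg
    have : τ * (σ⁻¹ * ε * σ) * τ⁻¹ = (σ * τ⁻¹)⁻¹ * ε * (σ * τ⁻¹) := by group
    rw [this]
    exact Subgroup.subset_closure ⟨σ * τ⁻¹, mul_mem hσ (inv_mem hτ), ε, hε, rfl⟩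
  | one => simpa using one_mem _
  | mul x y hx hy hx' hy' =>
    have : τ * (x * y) * τ⁻¹ = (τ * x * τ⁻¹) * (τ * y * τ⁻¹) := by group
    rw [this]; exact mul_mem hx' hy'
  | inv x hx hx' =>
    have : τ * x⁻¹ * τ⁻¹ = (τ * x * τ⁻¹)⁻¹ := by group
    rw [this]; exact inv_mem hx'

lemma rowGen (H : Subgroup ((Matrix (Fin n) (Fin n) R)ˣ)) (P : R → Prop) (l : Fin n)
    (htr : ∀ (m : Fin n) (hlm : l ≠ m) (y : R), P y → transv l m hlm y ∈ H) :
    ∀ (s : Finset (Fin n)) (q : Fin n → R), (∀ m ∉ s, q m = 0) → q l = 0 →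
      (∀ m, P (q m)) → ∀ (h : q ⬝ᵥ Pi.single l 1 = 0),
      elemU (Pi.single l 1) q h ∈ H := by
  intro s
  induction s using Finset.induction_on with
  | empty =>
    intro q hsupp hql hP h
    have hq : q = fun _ => 0 := funext fun m => hsupp m (by simp)
    have : elemU (Pi.single l 1) q h = 1 := by
      apply Units.ext
      show (1:Matrix (Fin n) (Fin n) R) + _ = 1
      have : vecMulVec (Pi.single l (1:R)) q = 0 := by
        ext a b; simp [vecMulVec_apply, hq]
      rw [this, add_zero]
    rw [this]; exact one_mem _
  | @insert m s hm ih =>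
    intro q hsupp hql hP h
    by_cases hml : m = l
    · refine ih q ?_ hql hP h
      intro m' hm'
      by_cases hmm : m' = m
      · rw [hmm, hml]; exact hql
      · exact hsupp m' (by simp [hmm, hm'])
    · set q2 : Fin n → R := fun b => if b = m then 0 else q b with hq2
      have hq : q = Pi.single m (q m) + q2 := by
        funext b
        by_cases hb : b = m
        · subst hb; simp [hq2]
        · simp [hq2, hb, Pi.single_apply]
      have h1 : Pi.single m (q m) ⬝ᵥ Pi.single l 1 = 0 :=
        single_dot_single l m (fun hh => hml hh.symm) (q m) 1
      have h2 : q2 ⬝ᵥ Pi.single l 1 = 0 := by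
        rw [dotProduct_single, mul_one, hq2]
        simp [show ¬ l = m from fun hh => hml hh.symm, hql]
      have hsplit : elemU (Pi.single l 1) q h =
          elemU (Pi.single l 1) (Pi.single m (q m)) h1 * elemU (Pi.single l 1) q2 h2 := by
        rw [elemU_congr (Pi.single l 1) q _ h hq]
        exact elemU_add_right _ _ _ h1 h2
      rw [hsplit]
      refine mul_mem ?_ ?_
      · rw [elemU_eq_transv' l m (fun hh => hml hh.symm) (q m) h1]
        exact htr m _ (q m) (hP m)
      · refine ih q2 ?_ ?_ ?_ h2
        · intro m' hm'
          by_cases hmm : m' = m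
          · simp [hq2, hmm]
          · have : m' ∉ insert m s := by simp [hmm, hm']
            simp [hq2, hmm, hsupp m' this]
        · simp [hq2, show ¬ l = m from fun hh => hml hh.symm, hql]
        · intro m'
          by_cases hmm : m' = m
          · simp only [hq2, hmm, if_pos rfl]
            have := hP l; rw [hql] at this; exact this
          · simp only [hq2, if_neg hmm]; exact hP m'

lemma colGen (H : Subgroup ((Matrix (Fin n) (Fin n) R)ˣ)) (P : R → Prop) (l : Fin n)
    (htr : ∀ (m : Fin n) (hml : m ≠ l) (y : R), P y → transv m l hml y ∈ H) :
    ∀ (s : Finset (Fin n)) (c : Fin n → R), (∀ m ∉ s, c m = 0) → c l = 0 →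
      (∀ m, P (c m)) → ∀ (h : Pi.single l 1 ⬝ᵥ c = 0),
      elemU c (Pi.single l 1) h ∈ H := by
  intro s
  induction s using Finset.induction_on with
  | empty =>
    intro c hsupp hcl hP h
    have hc : c = fun _ => 0 := funext fun m => hsupp m (by simp)
    have : elemU c (Pi.single l 1) h = 1 := by
      apply Units.ext
      show (1:Matrix (Fin n) (Fin n) R) + _ = 1
      have : vecMulVec c (Pi.single l (1:R)) = 0 := by
        ext a b; simp [vecMulVec_apply, hc]
      rw [this, add_zero]
    rw [this]; exact one_mem _
  | @insert m s hm ih =>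
    intro c hsupp hcl hP h
    by_cases hml : m = l
    · refine ih c ?_ hcl hP h
      intro m' hm'
      by_cases hmm : m' = m
      · rw [hmm, hml]; exact hcl
      · exact hsupp m' (by simp [hmm, hm'])
    · set c2 : Fin n → R := fun b => if b = m then 0 else c b with hc2
      have hc : c = Pi.single m (c m) + c2 := by
        funext b
        by_cases hb : b = m
        · subst hb; simp [hc2]
        · simp [hc2, hb, Pi.single_apply]
      have h1 : Pi.single l (1:R) ⬝ᵥ Pi.single m (c m) = 0 :=
        single_dot_single m l hml 1 (c m)
      have h2 : Pi.single l (1:R) ⬝ᵥ c2 = 0 := by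
        rw [single_dotProduct, one_mul, hc2]
        simp [show ¬ l = m from fun hh => hml hh.symm, hcl]
      have hsplit : elemU c (Pi.single l 1) h =
          elemU (Pi.single m (c m)) (Pi.single l 1) h1 * elemU c2 (Pi.single l 1) h2 := by
        rw [elemU_congr_left c (Pi.single m (c m) + c2) (Pi.single l 1) h hc]
        exact elemU_add_left _ _ _ h1 h2
      rw [hsplit]
      refine mul_mem ?_ ?_
      · rw [elemU_eq_transv m l hml (c m) h1]
        exact htr m hml (c m) (hP m)
      · refine ih c2 ?_ ?_ ?_ h2
        · intro m' hm'
          by_cases hmm : m' = m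
          · simp [hc2, hmm]
          · have : m' ∉ insert m s := by simp [hmm, hm']
            simp [hc2, hmm, hsupp m' this]
        · simp [hc2, show ¬ l = m from fun hh => hml hh.symm, hcl]
        · intro m'
          by_cases hmm : m' = m
          · simp only [hc2, hmm, if_pos rfl]
            have := hP l; rw [hcl] at this; exact this
          · simp only [hc2, if_neg hmm]; exact hP m'

lemma rowE_mem (l : Fin n) (q : Fin n → R) (hql : q l = 0) (h) :
    elemU (Pi.single l 1) q h ∈ elemGroup n R :=
  rowGen (elemGroup n R) (fun _ => True) l
    (fun m hlm y _ => transv_mem_elem l m hlm y) Finset.univ q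
    (fun m hm => absurd (Finset.mem_univ m) hm) hql (fun _ => trivial) h

lemma rowPre_mem (l : Fin n) (q : Fin n → R) (hql : q l = 0) (hI : ∀ m, q m ∈ I) (h) :
    elemU (Pi.single l 1) q h ∈ preElem n R I :=
  rowGen (preElem n R I) (fun y => y ∈ I) l
    (fun m hlm y hy => transv_mem_pre l m hlm y hy) Finset.univ q
    (fun m hm => absurd (Finset.mem_univ m) hm) hql hI h

lemma colE_mem (l : Fin n) (c : Fin n → R) (hcl : c l = 0) (h) :
    elemU c (Pi.single l 1) h ∈ elemGroup n R :=
  colGen (elemGroup n R) (fun _ => True) l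
    (fun m hml y _ => transv_mem_elem m l hml y) Finset.univ c
    (fun m hm => absurd (Finset.mem_univ m) hm) hcl (fun _ => trivial) h

lemma colPre_mem (l : Fin n) (c : Fin n → R) (hcl : c l = 0) (hI : ∀ m, c m ∈ I) (h) :
    elemU c (Pi.single l 1) h ∈ preElem n R I :=
  colGen (preElem n R I) (fun y => y ∈ I) l
    (fun m hml y hy => transv_mem_pre m l hml y hy) Finset.univ c
    (fun m hm => absurd (Finset.mem_univ m) hm) hcl hI h

end Membership
section DiagLayer
variable {n : ℕ} {R : Type*} [Ring R] {I : TwoSidedIdeal R}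

lemma stdBasisMatrix_neg' (i j : Fin n) (x : R) :
    Matrix.single i j (-x) = -Matrix.single i j x := by
  ext a b
  simp only [Matrix.single, Matrix.of_apply, Matrix.neg_apply]
  by_cases h : i = a ∧ j = b <;> simp [h]

lemma transv_inv (i j : Fin n) (hij : i ≠ j) (x : R) :
    (transv i j hij x)⁻¹ = transv i j hij (-x) := by
  apply Units.ext
  rfl

lemma transv_mul_same (i j : Fin n) (hij : i ≠ j) (x y : R) :
    transv i j hij x * transv i j hij y = transv i j hij (x + y) := by
  apply Units.ext
  show ((1:Matrix (Fin n) (Fin n) R) + Matrix.single i j x) * (1 + Matrix.single i j y)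
      = 1 + Matrix.single i j (x + y)
  have hcross : Matrix.single i j x * Matrix.single i j y = 0 :=
    Matrix.single_mul_single_of_ne (c := x) i j _ hij.symm y
  have expand : ((1:Matrix (Fin n) (Fin n) R) + Matrix.single i j x) * (1 + Matrix.single i j y)
      = 1 + Matrix.single i j x + Matrix.single i j y
        + Matrix.single i j x * Matrix.single i j y := by noncomm_ring
  rw [expand, hcross, add_zero, Matrix.single_add, add_assoc]

/-- `diag(1 + αβ)` (at position `l`) as a commutator of transvections. -/
def diagU (l p : Fin n) (hlp : l ≠ p) (α β : R) : (Matrix (Fin n) (Fin n) R)ˣ :=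
  transv l p hlp α * transv p l hlp.symm β * (transv l p hlp α)⁻¹ * (transv p l hlp.symm β)⁻¹

lemma diagU_val (l p : Fin n) (hlp : l ≠ p) (α β : R) (hβα : β * α = 0) :
    (diagU l p hlp α β).val = 1 + Matrix.single l l (α * β) := by
  set A := Matrix.single l p α with hA
  set B := Matrix.single p l β with hB
  have hAB : A * B = Matrix.single l l (α * β) := Matrix.single_mul_single_same (c := α) l p l β
  have hBA : B * A = 0 := by
    rw [hB, hA, Matrix.single_mul_single_same, hβα, Matrix.single_zero]
  have hAA : A * A = 0 := Matrix.single_mul_single_of_ne (c := α) l p _ hlp.symm α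
  have hBB : B * B = 0 := Matrix.single_mul_single_of_ne (c := β) p l _ hlp β
  have hCA : (A * B) * A = 0 := by
    rw [hAB, hA, Matrix.single_mul_single_same, mul_assoc, hβα, mul_zero, Matrix.single_zero]
  have hCB : (A * B) * B = 0 := by
    rw [hAB, hB]
    exact Matrix.single_mul_single_of_ne (c := _) l l _ hlp β
  have hval : (diagU l p hlp α β).val = (1 + A) * (1 + B) * (1 - A) * (1 - B) := by
    show ((1 + A) * (1 + B)) * (1 + Matrix.single l p (-α)) * (1 + Matrix.single p l (-β))
        = _
    rw [stdBasisMatrix_neg', stdBasisMatrix_neg', ← hA, ← hB]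
    rw [show (1:Matrix (Fin n) (Fin n) R) + -A = 1 - A by noncomm_ring,
      show (1:Matrix (Fin n) (Fin n) R) + -B = 1 - B by noncomm_ring]
  rw [hval]
  have step1 : ((1:Matrix (Fin n) (Fin n) R) + A) * (1 + B) = 1 + A + B + A * B := by
    noncomm_ring
  have step2 : ((1:Matrix (Fin n) (Fin n) R) + A + B + A * B) * (1 - A) = 1 + B + A * B := by
    have expand : ((1:Matrix (Fin n) (Fin n) R) + A + B + A * B) * (1 - A)
        = 1 - A + A - A * A + B - B * A + A * B - (A * B) * A := by noncomm_ring
    rw [expand, hAA, hBA, hCA]; abel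
  have step3 : ((1:Matrix (Fin n) (Fin n) R) + B + A * B) * (1 - B) = 1 + A * B := by
    have expand : ((1:Matrix (Fin n) (Fin n) R) + B + A * B) * (1 - B)
        = 1 - B + B - B * B + A * B - (A * B) * B := by noncomm_ring
    rw [expand, hBB, hCB]; abel
  rw [step1, step2, step3, hAB]

lemma diagU_mem_left (l p : Fin n) (hlp : l ≠ p) (α β : R) (hα : α ∈ I) :
    diagU l p hlp α β ∈ relElem n R I := by
  have hsplit : diagU l p hlp α β
      = transv l p hlp α * (transv p l hlp.symm β * (transv l p hlp α)⁻¹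
        * (transv p l hlp.symm β)⁻¹) := by
    rw [diagU]; group
  rw [hsplit]
  refine mul_mem (preElem_le_relElem (transv_mem_pre l p hlp α hα)) ?_
  rw [transv_inv]
  refine Subgroup.subset_closure ⟨(transv p l hlp.symm β)⁻¹,
    inv_mem (transv_mem_elem p l hlp.symm β),
    transv l p hlp (-α), transv_mem_pre l p hlp (-α) (neg_mem hα), ?_⟩
  group

lemma diagU_mem_right (l p : Fin n) (hlp : l ≠ p) (α β : R) (hβ : β ∈ I) :
    diagU l p hlp α β ∈ relElem n R I := by
  have hsplit : diagU l p hlp α β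
      = (transv l p hlp α * transv p l hlp.symm β * (transv l p hlp α)⁻¹)
        * (transv p l hlp.symm β)⁻¹ := by
    rw [diagU]
  rw [hsplit]
  refine mul_mem ?_ ?_
  · refine Subgroup.subset_closure ⟨(transv l p hlp α)⁻¹,
      inv_mem (transv_mem_elem l p hlp α),
      transv p l hlp.symm β, transv_mem_pre p l hlp.symm β hβ, ?_⟩
    group
  · rw [transv_inv]
    exact preElem_le_relElem (transv_mem_pre p l hlp.symm (-β) (neg_mem hβ))

end DiagLayer
section Core
variable {n : ℕ} {R : Type*} [Ring R]

lemma vmv_add_left (c1 c2 q : Fin n → R) :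
    vecMulVec (c1 + c2) q = vecMulVec c1 q + vecMulVec c2 q := by
  ext a b; simp [vecMulVec_apply, add_mul]

lemma std_mul_vmv (l : Fin n) (y : R) (q : Fin n → R) :
    Matrix.single l l y * vecMulVec (Pi.single l 1) q = vecMulVec (Pi.single l y) q := by
  have h1 : Matrix.single l l y = vecMulVec (Pi.single l y) (Pi.single l (1:R)) := by
    rw [vmv_single_single, mul_one]
  rw [h1, vmv_mul_vmv]
  have h2 : (Pi.single l (1:R) ⬝ᵥ Pi.single l 1) = 1 := by
    rw [single_dotProduct, Pi.single_eq_same, one_mul]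
  rw [h2]
  simp only [one_mul]

lemma coreLemma (hR : IsExchangeRing R) (I : TwoSidedIdeal R)
    (i j : Fin n) (hij : i ≠ j) (x : R) (v w z : Fin n → R)
    (H1 : (∑ l, w l * v l) = 0) (H2 : (∑ l, w l * z l) = 1)
    (H3 : ∀ l, l ≠ i → v l ∈ I) (H4 : ∀ l, l ≠ j → w l ∈ I)
    (H5 : v i * x * w j - x ∈ I)
    (Y : (Matrix (Fin n) (Fin n) R)ˣ)
    (hY : Y.val =
      1 - vecMulVec v (fun b => x * w b)) :
    transv i j hij x * Y ∈ relElem n R I := by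
  classical
  -- orthogonal idempotent family
  obtain ⟨h, hh, hmem, horth, hsum⟩ :=
    orthoFam hR n 1 (one_mul 1) (fun l => w l * z l)
      (fun l => one_mul _) (fun l => mul_one _) H2
  choose c0 hc0 using hmem
  obtain ⟨σ, hσ⟩ : ∃ σ : Fin n → R, ∀ l, h l = w l * σ l :=
    ⟨fun l => z l * c0 l, fun l => by rw [hc0, mul_assoc]⟩
  have hsum_erase : ∀ l : Fin n, (∑ m ∈ Finset.univ.erase l, h m) = 1 - h l := by
    intro l
    have := Finset.sum_erase_add Finset.univ h (Finset.mem_univ l)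
    rw [hsum] at this
    linear_combination (norm := abel) this
  have hH1_erase : ∀ l : Fin n, (∑ m ∈ Finset.univ.erase l, w m * v m) = - (w l * v l) := by
    intro l
    have := Finset.sum_erase_add Finset.univ (fun m => w m * v m) (Finset.mem_univ l)
    rw [H1] at this
    linear_combination (norm := abel) this
  obtain ⟨ξ, hξdef⟩ : ∃ ξ : Fin n → R, ∀ l, ξ l = v l - σ l * (h l * (w l * v l)) :=
    ⟨fun l => v l - σ l * (h l * (w l * v l)), fun l => rfl⟩
  -- K1 : goodness
  have K1 : ∀ l, h l * (w l * ξ l) = 0 := by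
    intro l
    have expand : h l * (w l * ξ l)
        = h l * (w l * v l) - ((h l * (w l * σ l)) * h l) * (w l * v l) := by
      rw [hξdef l]; noncomm_ring
    rw [expand, ← hσ l, hh l, hh l]
    abel
  have hwξ : ∀ l, w l * ξ l = w l * v l - h l * (w l * v l) := by
    intro l
    have expand : w l * ξ l = w l * v l - (w l * σ l) * (h l * (w l * v l)) := by
      rw [hξdef l]; noncomm_ring
    rw [expand, ← hσ l, ← mul_assoc, hh l]
  -- the elementary conjugators
  obtain ⟨Cτ, hCτ0, hCτne⟩ : ∃ Cτ : Fin n → Fin n → R, (∀ l, Cτ l l = 0) ∧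
      (∀ l m, m ≠ l → Cτ l m = -(σ m * (h m * w l))) :=
    ⟨fun l m => if m = l then 0 else -(σ m * (h m * w l)),
      fun l => by simp, fun l m hml => by simp [hml]⟩
  have hCτ_dot : ∀ l : Fin n, Pi.single l (1:R) ⬝ᵥ Cτ l = 0 := by
    intro l
    rw [single_dotProduct, hCτ0, mul_zero]
  set τu : Fin n → (Matrix (Fin n) (Fin n) R)ˣ :=
    fun l => elemU (Cτ l) (Pi.single l 1) (hCτ_dot l) with hτudef
  set xw : Fin n → R := fun b => x * w b with hxwdef
  set wh : Fin n → Fin n → R := fun l => xw ᵥ* (τu l).val with hwhdef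
  have helperσ : ∀ m t, w m * (σ m * (h m * t)) = h m * t := by
    intro m t
    rw [← mul_assoc, ← hσ m, ← mul_assoc, hh m]
  have whE2 : ∀ l b, b ≠ l → wh l b = x * w b := by
    intro l b hbl
    rw [hwhdef]; simp only
    show (xw ᵥ* ((1:Matrix (Fin n) (Fin n) R) + vecMulVec (Cτ l) (Pi.single l 1))) b = x * w b
    rw [Matrix.vecMul_add, Matrix.vecMul_one]
    have hterm : (xw ᵥ* vecMulVec (Cτ l) (Pi.single l 1)) b = 0 := by
      simp [Matrix.vecMul, dotProduct, vecMulVec_apply, Pi.single_apply, hbl]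
    rw [Pi.add_apply, hterm, add_zero, hxwdef]
  have whE1 : ∀ l, wh l l = x * (h l * w l) := by
    intro l
    rw [hwhdef]; simp only
    show (xw ᵥ* ((1:Matrix (Fin n) (Fin n) R) + vecMulVec (Cτ l) (Pi.single l 1))) l
      = x * (h l * w l)
    rw [Matrix.vecMul_add, Matrix.vecMul_one, Pi.add_apply]
    have hterm : (xw ᵥ* vecMulVec (Cτ l) (Pi.single l 1)) l = ∑ m, xw m * Cτ l m := by
      simp [Matrix.vecMul, dotProduct, vecMulVec_apply, Pi.single_eq_same, mul_assoc]
    rw [hterm]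
    have h0 : (∑ m ∈ Finset.univ.erase l, xw m * Cτ l m) + xw l * Cτ l l
        = ∑ m, xw m * Cτ l m :=
      Finset.sum_erase_add Finset.univ (fun m => xw m * Cτ l m) (Finset.mem_univ l)
    have hl0 : xw l * Cτ l l = 0 := by
      rw [hCτ0, mul_zero]
    rw [hl0, add_zero] at h0
    rw [← h0]
    have hcongr : (∑ m ∈ Finset.univ.erase l, xw m * Cτ l m)
        = ∑ m ∈ Finset.univ.erase l, -(x * (h m * w l)) := by
      apply Finset.sum_congr rfl
      intro m hm
      have hml : m ≠ l := Finset.ne_of_mem_erase hm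
      rw [hCτne l m hml, hxwdef]; simp only
      rw [mul_neg, mul_assoc, helperσ m (w l), ← mul_assoc]
    rw [hcongr, Finset.sum_neg_distrib]
    have : (∑ m ∈ Finset.univ.erase l, x * (h m * w l))
        = x * ((1 - h l) * w l) := by
      rw [← Finset.mul_sum, ← Finset.sum_mul, hsum_erase l]
    rw [this, hxwdef]; simp only
    noncomm_ring
  -- columns of the pieces
  set A : Fin n → Fin n → R := fun l => (τu l).val *ᵥ Pi.single l (ξ l) with hAdef
  have hA_apply : ∀ l m, A l m = (Pi.single l (ξ l) : Fin n → R) m + Cτ l m * ξ l := by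
    intro l m
    rw [hAdef]; simp only
    show (((1:Matrix (Fin n) (Fin n) R) + vecMulVec (Cτ l) (Pi.single l 1)) *ᵥ
      Pi.single l (ξ l)) m = _
    rw [Matrix.add_mulVec, Matrix.one_mulVec, Matrix.mulVec_single, Pi.add_apply]
    simp [vecMulVec_apply, Pi.single_eq_same]
  have K2 : ∀ l, (∑ m, w m * A l m) = 0 := by
    intro l
    have hcongr : (∑ m, w m * A l m)
        = ∑ m, (w m * (Pi.single l (ξ l) : Fin n → R) m + w m * (Cτ l m * ξ l)) := by
      apply Finset.sum_congr rfl
      intro m _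
      rw [hA_apply l m, mul_add]
    rw [hcongr, Finset.sum_add_distrib]
    have hfirst : (∑ m, w m * (Pi.single l (ξ l) : Fin n → R) m) = w l * ξ l := by
      rw [Finset.sum_eq_single l]
      · rw [Pi.single_eq_same]
      · intro m _ hml
        rw [Pi.single_eq_of_ne hml, mul_zero]
      · intro hl; exact absurd (Finset.mem_univ l) hl
    have hsecond : (∑ m, w m * (Cτ l m * ξ l)) = -((1 - h l) * (w l * ξ l)) := by
      have h0 : (∑ m ∈ Finset.univ.erase l, w m * (Cτ l m * ξ l)) + w l * (Cτ l l * ξ l)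
          = ∑ m, w m * (Cτ l m * ξ l) :=
        Finset.sum_erase_add Finset.univ (fun m => w m * (Cτ l m * ξ l)) (Finset.mem_univ l)
      have hl0 : w l * (Cτ l l * ξ l) = 0 := by
        rw [hCτ0, zero_mul, mul_zero]
      rw [hl0, add_zero] at h0
      rw [← h0]
      have hcongr2 : (∑ m ∈ Finset.univ.erase l, w m * (Cτ l m * ξ l))
          = ∑ m ∈ Finset.univ.erase l, -(h m * (w l * ξ l)) := by
        apply Finset.sum_congr rfl
        intro m hm
        have hml : m ≠ l := Finset.ne_of_mem_erase hm
        rw [hCτne l m hml]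
        rw [neg_mul, mul_neg, mul_assoc, mul_assoc, helperσ m (w l * ξ l)]
      rw [hcongr2, Finset.sum_neg_distrib, ← Finset.sum_mul, hsum_erase l]
    rw [hfirst, hsecond]
    have hK1 := K1 l
    have expand : w l * ξ l + -((1 - h l) * (w l * ξ l)) = h l * (w l * ξ l) := by
      noncomm_ring
    rw [expand, hK1]
  have K3 : ∀ m : Fin n, (∑ l, A l m) = v m := by
    intro m
    have hcongr : (∑ l, A l m)
        = ∑ l, ((Pi.single l (ξ l) : Fin n → R) m + Cτ l m * ξ l) := by
      apply Finset.sum_congr rfl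
      intro l _
      exact hA_apply l m
    rw [hcongr, Finset.sum_add_distrib]
    have hfirst : (∑ l, (Pi.single l (ξ l) : Fin n → R) m) = ξ m := by
      rw [Finset.sum_eq_single m]
      · rw [Pi.single_eq_same]
      · intro l _ hlm
        rw [Pi.single_eq_of_ne (Ne.symm hlm)]
      · intro hl; exact absurd (Finset.mem_univ m) hl
    have hsecond : (∑ l, Cτ l m * ξ l) = σ m * (h m * (w m * v m)) := by
      have h0 : (∑ l ∈ Finset.univ.erase m, Cτ l m * ξ l) + Cτ m m * ξ m
          = ∑ l, Cτ l m * ξ l :=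
        Finset.sum_erase_add Finset.univ (fun l => Cτ l m * ξ l) (Finset.mem_univ m)
      have hm0 : Cτ m m * ξ m = 0 := by
        rw [hCτ0, zero_mul]
      rw [hm0, add_zero] at h0
      rw [← h0]
      have hcongr2 : (∑ l ∈ Finset.univ.erase m, Cτ l m * ξ l)
          = ∑ l ∈ Finset.univ.erase m, -(σ m * (h m * (w l * ξ l))) := by
        apply Finset.sum_congr rfl
        intro l hl
        have hlm : l ≠ m := Finset.ne_of_mem_erase hl
        rw [hCτne l m (Ne.symm hlm)]
        rw [neg_mul, mul_assoc, mul_assoc]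
      rw [hcongr2, Finset.sum_neg_distrib, ← Finset.mul_sum, ← Finset.mul_sum]
      have hT : (∑ l ∈ Finset.univ.erase m, w l * ξ l)
          = -(w m * v m) - ∑ l ∈ Finset.univ.erase m, h l * (w l * v l) := by
        rw [Finset.sum_congr rfl (fun l _ => hwξ l), Finset.sum_sub_distrib, hH1_erase m]
      rw [hT]
      have hdist : h m * (-(w m * v m) - ∑ l ∈ Finset.univ.erase m, h l * (w l * v l))
          = -(h m * (w m * v m)) - ∑ l ∈ Finset.univ.erase m, h m * (h l * (w l * v l)) := by
        rw [mul_sub, mul_neg, Finset.mul_sum]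
      have hzero : (∑ l ∈ Finset.univ.erase m, h m * (h l * (w l * v l))) = 0 := by
        apply Finset.sum_eq_zero; intro l hl
        have hlm : l ≠ m := Finset.ne_of_mem_erase hl
        rw [← mul_assoc, horth m l (Ne.symm hlm), zero_mul]
      rw [hdist, hzero, sub_zero, mul_neg, neg_neg]
    rw [hfirst, hsecond, hξdef m]
    abel
  -- partner index
  obtain ⟨p, hlp, hpmain⟩ : ∃ p : Fin n → Fin n, (∀ l, l ≠ p l) ∧ p i = j :=
    ⟨fun l => if l = i then j else i, fun l => by
      by_cases hl : l = i
      · subst hl; simpa using hij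
      · simpa [hl] using hl, by simp⟩
  -- the scalar ν and its square-zero property
  obtain ⟨ν, hν⟩ : ∃ ν : Fin n → R, ∀ l, ν l = ξ l * wh l l :=
    ⟨fun l => ξ l * wh l l, fun l => rfl⟩
  have hwξ0 : ∀ l, wh l l * ξ l = 0 := by
    intro l
    rw [whE1 l, mul_assoc x, mul_assoc (h l), K1 l, mul_zero]
  have hνν : ∀ l, ν l * ν l = 0 := by
    intro l
    rw [hν l, mul_assoc, ← mul_assoc (wh l l), hwξ0 l, zero_mul, mul_zero]
  have hβα : ∀ l, wh l l * (-(ξ l)) = 0 := by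
    intro l; rw [mul_neg, hwξ0 l, neg_zero]
  -- the row vector of the inner factor
  obtain ⟨qt, hqt0, hqtne⟩ : ∃ qt : Fin n → Fin n → R, (∀ l, qt l l = 0) ∧
      (∀ l b, b ≠ l → qt l b = -((1 + ν l) * (ξ l * wh l b))) :=
    ⟨fun l b => if b = l then 0 else -((1 + ν l) * (ξ l * wh l b)),
      fun l => by simp, fun l b hbl => by simp [hbl]⟩
  have hqt_dot : ∀ l, qt l ⬝ᵥ Pi.single l (1:R) = 0 := by
    intro l
    rw [dotProduct_single, hqt0, zero_mul]
  -- the three unit factors of each piece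
  set rowU : Fin n → (Matrix (Fin n) (Fin n) R)ˣ :=
    fun l => elemU (Pi.single l 1) (qt l) (hqt_dot l) with hrowUdef
  set Dg : Fin n → (Matrix (Fin n) (Fin n) R)ˣ :=
    fun l => diagU l (p l) (hlp l) (-(ξ l)) (wh l l) with hDgdef
  set U : Fin n → (Matrix (Fin n) (Fin n) R)ˣ :=
    fun l => τu l * (Dg l * rowU l) * (τu l)⁻¹ with hUdef
  -- inner value
  have hinner : ∀ l, (Dg l * rowU l).val
      = 1 - vecMulVec (Pi.single l (ξ l)) (wh l) := by
    intro l
    rw [Units.val_mul, hDgdef, hrowUdef]; simp only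
    rw [diagU_val l (p l) (hlp l) (-(ξ l)) (wh l l) (hβα l), elemU_val]
    have hsd : (-(ξ l)) * wh l l = -(ν l) := by rw [neg_mul, hν l]
    rw [hsd]
    have expand : ((1:Matrix (Fin n) (Fin n) R) + Matrix.single l l (-(ν l)))
        * (1 + vecMulVec (Pi.single l 1) (qt l))
        = 1 + Matrix.single l l (-(ν l)) + vecMulVec (Pi.single l 1) (qt l)
          + Matrix.single l l (-(ν l)) * vecMulVec (Pi.single l 1) (qt l) := by
      noncomm_ring
    rw [expand, std_mul_vmv]
    have hoff : ∀ b, b ≠ l → qt l b + (-(ν l)) * qt l b = -(ξ l * wh l b) := by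
      intro b hbl
      rw [hqtne l b hbl]
      have expand2 : -((1 + ν l) * (ξ l * wh l b))
          + (-(ν l)) * -((1 + ν l) * (ξ l * wh l b))
          = -(ξ l * wh l b) + (ν l * ν l) * (ξ l * wh l b) := by noncomm_ring
      rw [expand2, hνν l, zero_mul, add_zero]
    ext a b
    simp only [Matrix.add_apply, Matrix.sub_apply, vecMulVec_apply]
    by_cases hal : a = l
    · subst hal
      by_cases hbl : a = b
      · subst hbl
        simp only [Matrix.one_apply_eq, Pi.single_eq_same,
          Matrix.single_apply_same, hqt0, hν, mul_zero, one_mul, add_zero]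
        abel
      · have h2 : ¬ (a = a ∧ a = b) := fun hc => hbl hc.2
        have h3 := hoff b (fun hc => hbl hc.symm)
        simp only [Matrix.one_apply_ne hbl, Matrix.single_apply_of_ne _ _ _ _ _ h2,
          Pi.single_eq_same, one_mul, zero_add]
        rw [h3]
        abel
    · have h2 : ¬ (l = a ∧ l = b) := fun hc => hal hc.1.symm
      simp only [Matrix.single_apply_of_ne _ _ _ _ _ h2,
        Pi.single_eq_of_ne hal, zero_mul, add_zero, sub_zero]
  -- piece value
  have hτinv : ∀ l, (τu l).val * ((τu l)⁻¹).val = 1 := by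
    intro l
    rw [← Units.val_mul, mul_inv_cancel, Units.val_one]
  have hUval : ∀ l, (U l).val = 1 - vecMulVec (A l) xw := by
    intro l
    rw [hUdef]; simp only
    rw [Units.val_mul, Units.val_mul, hinner l]
    have expand : (τu l).val * (1 - vecMulVec (Pi.single l (ξ l)) (wh l))
        = (τu l).val - (τu l).val * vecMulVec (Pi.single l (ξ l)) (wh l) := by
      noncomm_ring
    rw [expand, sub_mul, hτinv l]
    rw [mul_vmv, vmv_mul]
    have hcol : (τu l).val *ᵥ Pi.single l (ξ l) = A l := by rw [hAdef]
    have hrow : wh l ᵥ* ((τu l)⁻¹).val = xw := by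
      rw [hwhdef]; simp only
      rw [Matrix.vecMul_vecMul, ← Units.val_mul, mul_inv_cancel, Units.val_one,
        Matrix.vecMul_one]
    rw [hcol, hrow]
  -- memberships of the non-main pieces
  have hτuE : ∀ l, τu l ∈ elemGroup n R := by
    intro l
    exact colE_mem l (Cτ l) (hCτ0 l) (hCτ_dot l)
  have hξI : ∀ l, l ≠ i → ξ l ∈ I := by
    intro l hl
    rw [hξdef l]
    refine TwoSidedIdeal.sub_mem _ (H3 l hl) ?_
    exact TwoSidedIdeal.mul_mem_left _ _ _ (TwoSidedIdeal.mul_mem_left _ _ _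
      (TwoSidedIdeal.mul_mem_left _ _ _ (H3 l hl)))
  have hUmem : ∀ l, l ≠ i → U l ∈ relElem n R I := by
    intro l hl
    rw [hUdef]; simp only
    refine conj_mem_relElem (hτuE l) ?_
    refine mul_mem ?_ ?_
    · rw [hDgdef]; simp only
      exact diagU_mem_left l (p l) (hlp l) _ _ (TwoSidedIdeal.neg_mem _ (hξI l hl))
    · rw [hrowUdef]; simp only
      refine preElem_le_relElem (rowPre_mem l (qt l) (hqt0 l) ?_ (hqt_dot l))
      intro b
      by_cases hbl : b = l
      · rw [hbl, hqt0]; exact TwoSidedIdeal.zero_mem _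
      · rw [hqtne l b hbl]
        exact TwoSidedIdeal.neg_mem _ (TwoSidedIdeal.mul_mem_left _ _ _
          (TwoSidedIdeal.mul_mem_right _ _ _ (hξI l hl)))
  -- partial products
  obtain ⟨Bv, hBv⟩ : ∃ Bv : Finset (Fin n) → (Fin n → R),
      ∀ s m, Bv s m = ∑ l ∈ s, A l m :=
    ⟨fun s m => ∑ l ∈ s, A l m, fun s m => rfl⟩
  have hxwA : ∀ l, xw ⬝ᵥ A l = 0 := by
    intro l
    rw [dotProduct]
    have hcongr : (∑ b, xw b * A l b) = ∑ b, x * (w b * A l b) := by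
      apply Finset.sum_congr rfl
      intro b _
      rw [hxwdef]; simp only; rw [mul_assoc]
    rw [hcongr, ← Finset.mul_sum, K2 l, mul_zero]
  have hxwB : ∀ s, xw ⬝ᵥ (Bv s) = 0 := by
    intro s
    rw [dotProduct]
    have hcongr : (∑ b, xw b * Bv s b) = ∑ b, ∑ l ∈ s, xw b * A l b := by
      apply Finset.sum_congr rfl
      intro b _
      rw [hBv, Finset.mul_sum]
    rw [hcongr, Finset.sum_comm]
    apply Finset.sum_eq_zero
    intro l _
    rw [← dotProduct, hxwA l]
  have hBsq : ∀ s, (-(vecMulVec (Bv s) xw)) * (-(vecMulVec (Bv s) xw)) = 0 := by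
    intro s
    rw [neg_mul_neg, vmv_mul_vmv, hxwB s]
    ext a b; simp [vecMulVec_apply]
  set Zu : Finset (Fin n) → (Matrix (Fin n) (Fin n) R)ˣ :=
    fun s => nilU (-(vecMulVec (Bv s) xw)) (hBsq s) with hZudef
  have hZmem : ∀ s : Finset (Fin n), i ∉ s → Zu s ∈ relElem n R I := by
    intro s
    induction s using Finset.induction_on with
    | empty =>
      intro _
      have : Zu ∅ = 1 := by
        apply Units.ext
        rw [hZudef]; simp only [nilU_val]
        have : vecMulVec (Bv ∅) xw = 0 := by
          ext a b
          simp [vecMulVec_apply, hBv]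
        rw [this, neg_zero, add_zero, Units.val_one]
      rw [this]; exact one_mem _
    | @insert l s hl ih =>
      intro hins
      have hli : l ≠ i := fun hc => hins (by rw [hc]; exact Finset.mem_insert_self i s)
      have his : i ∉ s := fun hc => hins (Finset.mem_insert_of_mem hc)
      have hsplit : Zu (insert l s) = U l * Zu s := by
        apply Units.ext
        rw [Units.val_mul, hUval l, hZudef]; simp only [nilU_val]
        have hBins : Bv (insert l s) = A l + Bv s := by
          funext m
          rw [hBv, Finset.sum_insert hl, Pi.add_apply, hBv]
        have hcross : vecMulVec (A l) xw * vecMulVec (Bv s) xw = 0 := by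
          rw [vmv_mul_vmv, hxwB s]
          ext a b; simp [vecMulVec_apply]
        have expand : ((1:Matrix (Fin n) (Fin n) R) - vecMulVec (A l) xw)
            * (1 + -(vecMulVec (Bv s) xw))
            = 1 + -(vecMulVec (A l) xw + vecMulVec (Bv s) xw)
              + vecMulVec (A l) xw * vecMulVec (Bv s) xw := by noncomm_ring
        rw [hBins, vmv_add_left, expand, hcross, add_zero]
      rw [hsplit]
      exact mul_mem (hUmem l hli) (ih his)
  -- decomposition of Y
  have hYsplit : Y = Zu (Finset.univ.erase i) * U i := by
    apply Units.ext
    rw [Units.val_mul, hUval i, hZudef]; simp only [nilU_val]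
    have hsum3 : Bv (Finset.univ.erase i) + A i = v := by
      funext m
      rw [Pi.add_apply, hBv]
      have := Finset.sum_erase_add Finset.univ (fun l => A l m) (Finset.mem_univ i)
      rw [← K3 m]
      exact this
    have hcross : vecMulVec (Bv (Finset.univ.erase i)) xw * vecMulVec (A i) xw = 0 := by
      rw [vmv_mul_vmv, hxwA i]
      ext a b; simp [vecMulVec_apply]
    have expand : ((1:Matrix (Fin n) (Fin n) R) + -(vecMulVec (Bv (Finset.univ.erase i)) xw))
        * (1 - vecMulVec (A i) xw)
        = 1 - (vecMulVec (Bv (Finset.univ.erase i)) xw + vecMulVec (A i) xw)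
          + vecMulVec (Bv (Finset.univ.erase i)) xw * vecMulVec (A i) xw := by noncomm_ring
    rw [hY, expand, hcross, add_zero, ← vmv_add_left, hsum3]
  -- the main piece
  have hwiI : w i ∈ I := H4 i hij
  have hτuIpre : τu i ∈ preElem n R I := by
    refine colPre_mem i (Cτ i) (hCτ0 i) ?_ (hCτ_dot i)
    intro m
    by_cases hmi : m = i
    · rw [hmi, hCτ0]; exact TwoSidedIdeal.zero_mem _
    · rw [hCτne i m hmi]
      exact TwoSidedIdeal.neg_mem _ (TwoSidedIdeal.mul_mem_left _ _ _
        (TwoSidedIdeal.mul_mem_left _ _ _ hwiI))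
  have hwhiI : wh i i ∈ I := by
    rw [whE1 i]
    exact TwoSidedIdeal.mul_mem_left _ _ _ (TwoSidedIdeal.mul_mem_left _ _ _ hwiI)
  have hDgiMem : Dg i ∈ relElem n R I := by
    rw [hDgdef]; simp only
    exact diagU_mem_right i (p i) (hlp i) _ _ hwhiI
  -- split the main row unit
  obtain ⟨qh, hqh_j, hqh_ne⟩ : ∃ qh : Fin n → R, qh j = 0 ∧
      (∀ b, b ≠ j → qh b = qt i b) :=
    ⟨fun b => if b = j then 0 else qt i b, by simp, fun b hbj => by simp [hbj]⟩
  have hqh_dot : qh ⬝ᵥ Pi.single i (1:R) = 0 := by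
    rw [dotProduct_single, hqh_ne i hij, hqt0, zero_mul]
  have hqhI : ∀ b, qh b ∈ I := by
    intro b
    by_cases hbj : b = j
    · rw [hbj, hqh_j]; exact TwoSidedIdeal.zero_mem _
    · rw [hqh_ne b hbj]
      by_cases hbi : b = i
      · rw [hbi, hqt0]; exact TwoSidedIdeal.zero_mem _
      · rw [hqtne i b hbi]
        have hwhbI : wh i b ∈ I := by
          rw [whE2 i b hbi]
          exact TwoSidedIdeal.mul_mem_left _ _ _ (H4 b hbj)
        exact TwoSidedIdeal.neg_mem _ (TwoSidedIdeal.mul_mem_left _ _ _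
          (TwoSidedIdeal.mul_mem_left _ _ _ hwhbI))
  have hqt_split : qt i = qh + Pi.single j (qt i j) := by
    funext b
    by_cases hbj : b = j
    · subst hbj
      rw [Pi.add_apply, hqh_j, Pi.single_eq_same, zero_add]
    · rw [Pi.add_apply, hqh_ne b hbj, Pi.single_eq_of_ne hbj, add_zero]
  have hrow_split : rowU i = elemU (Pi.single i 1) qh hqh_dot
      * transv i j hij (qt i j) := by
    rw [hrowUdef]; simp only
    rw [elemU_congr (Pi.single i 1) (qt i) (qh + Pi.single j (qt i j)) (hqt_dot i) hqt_split]
    rw [elemU_add_right (Pi.single i 1) qh (Pi.single j (qt i j)) hqh_dot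
      (single_dot_single i j hij (qt i j) 1)]
    rw [elemU_eq_transv' i j hij (qt i j) _]
  -- the crucial congruence
  have hxqI : x + qt i j ∈ I := by
    have hwh_ij : wh i j = x * w j := whE2 i j hij.symm
    have hidentity : x + qt i j
        = -(v i * x * w j - x) + (σ i * (h i * (w i * v i))) * (x * w j)
          - ν i * ((v i - σ i * (h i * (w i * v i))) * (x * w j)) := by
      rw [hqtne i j hij.symm, hwh_ij, hξdef i]
      noncomm_ring
    rw [hidentity]
    refine TwoSidedIdeal.sub_mem _ (TwoSidedIdeal.add_mem _
      (TwoSidedIdeal.neg_mem _ H5) ?_) ?_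
    · refine TwoSidedIdeal.mul_mem_right _ _ _ ?_
      exact TwoSidedIdeal.mul_mem_left _ _ _ (TwoSidedIdeal.mul_mem_left _ _ _
        (TwoSidedIdeal.mul_mem_right _ _ _ hwiI))
    · refine TwoSidedIdeal.mul_mem_right _ _ _ ?_
      rw [hν i]
      exact TwoSidedIdeal.mul_mem_left _ _ _ hwhiI
  -- assemble the main piece
  set t : (Matrix (Fin n) (Fin n) R)ˣ := transv i j hij x with htdef
  have htE : t ∈ elemGroup n R := transv_mem_elem i j hij x
  have hmain : t * U i ∈ relElem n R I := by
    have hassemble : t * U i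
        = (t * τu i * t⁻¹) * (t * Dg i * t⁻¹)
          * (t * elemU (Pi.single i 1) qh hqh_dot * t⁻¹)
          * (t * transv i j hij (qt i j)) * (τu i)⁻¹ := by
      rw [hUdef]; simp only
      rw [hrow_split]
      group
    rw [hassemble]
    have httj : t * transv i j hij (qt i j) = transv i j hij (x + qt i j) := by
      rw [htdef]
      exact transv_mul_same i j hij x (qt i j)
    rw [httj]
    refine mul_mem (mul_mem (mul_mem (mul_mem ?_ ?_) ?_) ?_) ?_
    · exact conj_mem_relElem htE (preElem_le_relElem hτuIpre)
    · exact conj_mem_relElem htE hDgiMem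
    · refine conj_mem_relElem htE (preElem_le_relElem ?_)
      exact rowPre_mem i qh (hqh_ne i hij ▸ hqt0 i) hqhI hqh_dot
    · exact preElem_le_relElem (transv_mem_pre i j hij _ hxqI)
    · exact inv_mem (preElem_le_relElem hτuIpre)
  -- final assembly
  have hfinal : t * Y = (t * Zu (Finset.univ.erase i) * t⁻¹) * (t * U i) := by
    rw [hYsplit]
    group
  rw [htdef] at hfinal
  rw [hfinal]
  refine mul_mem ?_ ?_
  · exact conj_mem_relElem htE (hZmem _ (by simp))
  · rw [← htdef]; exact hmain

end Core
section Centrality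
variable {n : ℕ} {R : Type*} [Ring R]

lemma mem_iff_pi (I : TwoSidedIdeal R) (x : R) :
    x ∈ I ↔ (RingCon.mk' I.ringCon) x = 0 := by
  rw [TwoSidedIdeal.mem_iff]
  constructor
  · intro hx
    have : (RingCon.mk' I.ringCon) x = (RingCon.mk' I.ringCon) 0 := Quotient.sound' hx
    rw [this, _root_.map_zero]
  · intro hx
    have : (RingCon.mk' I.ringCon) x = (RingCon.mk' I.ringCon) 0 := by rw [hx, _root_.map_zero]
    exact Quotient.eq''.mp this

lemma map_one_add_std {S : Type*} [Ring S] (f : R →+* S) (k l : Fin n) (s : R) :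
    ((1 + Matrix.single k l s) : Matrix (Fin n) (Fin n) R).map f
      = 1 + Matrix.single k l (f s) := by
  ext a b
  simp only [Matrix.map_apply, Matrix.add_apply, Matrix.one_apply,
    Matrix.single, Matrix.of_apply]
  rw [_root_.map_add, apply_ite f, apply_ite f, _root_.map_one, _root_.map_zero]

lemma mul_std_apply {S : Type*} [Ring S] (M : Matrix (Fin n) (Fin n) S) (k l : Fin n)
    (t : S) (a b : Fin n) :
    (M * Matrix.single k l t) a b = if b = l then M a k * t else 0 := by
  rw [Matrix.mul_apply]
  by_cases hbl : b = l
  · subst hbl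
    rw [if_pos rfl, Finset.sum_eq_single k]
    · simp [Matrix.single, Matrix.of_apply]
    · intro m _ hmk
      simp only [Matrix.single, Matrix.of_apply]
      rw [if_neg (fun h => hmk h.1.symm), mul_zero]
    · intro hk; exact absurd (Finset.mem_univ k) hk
  · rw [if_neg hbl]
    apply Finset.sum_eq_zero
    intro m _
    simp only [Matrix.single, Matrix.of_apply]
    rw [if_neg (fun h => hbl h.2.symm), mul_zero]
lemma std_mul_apply {S : Type*} [Ring S] (M : Matrix (Fin n) (Fin n) S) (k l : Fin n)
    (t : S) (a b : Fin n) :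
    (Matrix.single k l t * M) a b = if a = k then t * M l b else 0 := by
  rw [Matrix.mul_apply]
  by_cases hak : a = k
  · subst hak
    rw [if_pos rfl, Finset.sum_eq_single l]
    · simp [Matrix.single, Matrix.of_apply]
    · intro m _ hml
      simp only [Matrix.single, Matrix.of_apply]
      rw [if_neg (fun h => hml h.2.symm), zero_mul]
    · intro hl; exact absurd (Finset.mem_univ l) hl
  · rw [if_neg hak]
    apply Finset.sum_eq_zero
    intro m _
    simp only [Matrix.single, Matrix.of_apply]
    rw [if_neg (fun h => hak h.1.symm), zero_mul]

/-- The commutation equations satisfied by elements of the congruence subgroup. -/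
lemma congr_comm (I : TwoSidedIdeal R) (u : (Matrix (Fin n) (Fin n) R)ˣ)
    (hu : u ∈ congrSubgroup n R I) (k l : Fin n) (hkl : k ≠ l) (s : R) :
    (u.val.map (RingCon.mk' I.ringCon)) * Matrix.single k l ((RingCon.mk' I.ringCon) s)
      = Matrix.single k l ((RingCon.mk' I.ringCon) s) * (u.val.map (RingCon.mk' I.ringCon)) := by
  set π := RingCon.mk' I.ringCon
  have hc := Subgroup.mem_center_iff.mp hu
    (Units.map ((RingHom.mapMatrix π).toMonoidHom) (transv k l hkl s))
  have hval := congrArg Units.val hc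
  rw [Units.val_mul, Units.val_mul] at hval
  have h1 : (Units.map ((RingHom.mapMatrix π).toMonoidHom)
      (transv k l hkl s)).val = 1 + Matrix.single k l (π s) := by
    show (RingHom.mapMatrix π) (transv k l hkl s).val = _
    show ((1 + Matrix.single k l s : Matrix (Fin n) (Fin n) R)).map π = _
    exact map_one_add_std π k l s
  have h2 : (Units.map ((RingHom.mapMatrix π).toMonoidHom) u).val
      = u.val.map π := rfl
  rw [h1, h2] at hval
  have expand : (1 + Matrix.single k l (π s)) * (u.val.map π)
      = u.val.map π + Matrix.single k l (π s) * (u.val.map π) := by noncomm_ring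
  have expand2 : (u.val.map π) * (1 + Matrix.single k l (π s))
      = u.val.map π + (u.val.map π) * Matrix.single k l (π s) := by noncomm_ring
  rw [expand, expand2] at hval
  have := add_left_cancel hval
  rw [this]

lemma congr_offdiag (I : TwoSidedIdeal R) (u : (Matrix (Fin n) (Fin n) R)ˣ)
    (hu : u ∈ congrSubgroup n R I) (a b : Fin n) (hab : a ≠ b) :
    u.val a b ∈ I := by
  set π := RingCon.mk' I.ringCon
  have hc := congr_comm I u hu b a (Ne.symm hab) 1
  have he := congrArg (fun M => M a a) hc
  rw [mul_std_apply, std_mul_apply, if_pos rfl, if_neg hab] at he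
  rw [mem_iff_pi]
  have : (u.val.map π) a b = π (u.val a b) := rfl
  rw [← this]
  rw [_root_.map_one, mul_one] at he
  exact he

lemma congr_diag (I : TwoSidedIdeal R) (u : (Matrix (Fin n) (Fin n) R)ˣ)
    (hu : u ∈ congrSubgroup n R I) (k l : Fin n) (hkl : k ≠ l) (s : R) :
    (RingCon.mk' I.ringCon) (u.val k k * s) = (RingCon.mk' I.ringCon) (s * u.val l l) := by
  set π := RingCon.mk' I.ringCon
  have hc := congr_comm I u hu k l hkl s
  have he := congrArg (fun M => M k l) hc
  rw [mul_std_apply, std_mul_apply, if_pos rfl, if_pos rfl] at he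
  rw [_root_.map_mul, _root_.map_mul]
  exact he

end Centrality
section Main
variable {n : ℕ} {R : Type*} [Ring R]
open scoped commutatorElement

lemma mul_std_mul_apply (A B : Matrix (Fin n) (Fin n) R) (i j : Fin n) (t : R)
    (a b : Fin n) :
    (A * Matrix.single i j t * B) a b = A a i * t * B j b := by
  rw [Matrix.mul_apply]
  rw [Finset.sum_eq_single j]
  · rw [mul_std_apply, if_pos rfl]
  · intro m _ hmj
    rw [mul_std_apply, if_neg hmj, zero_mul]
  · intro hj; exact absurd (Finset.mem_univ j) hj

lemma commutator_transv_mem (hR : IsExchangeRing R) (I : TwoSidedIdeal R)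
    (i j : Fin n) (hij : i ≠ j) (x : R) (u : (Matrix (Fin n) (Fin n) R)ˣ)
    (hu : u ∈ congrSubgroup n R I) :
    ⁅transv i j hij x, u⁆ ∈ relElem n R I := by
  classical
  set π := RingCon.mk' I.ringCon with hπdef
  set v : Fin n → R := fun l => u.val l i with hvdef
  set w : Fin n → R := fun l => (u⁻¹).val j l with hwdef
  set z : Fin n → R := fun l => u.val l j with hzdef
  have hinvmul : (u⁻¹).val * u.val = 1 := by
    rw [← Units.val_mul, inv_mul_cancel, Units.val_one]
  have hmulinv : u.val * (u⁻¹).val = 1 := by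
    rw [← Units.val_mul, mul_inv_cancel, Units.val_one]
  have H1 : (∑ l, w l * v l) = 0 := by
    have := congrArg (fun M => M j i) hinvmul
    simp only [Matrix.mul_apply] at this
    rw [this]
    exact Matrix.one_apply_ne hij.symm
  have H2 : (∑ l, w l * z l) = 1 := by
    have := congrArg (fun M => M j j) hinvmul
    simp only [Matrix.mul_apply] at this
    rw [this, Matrix.one_apply_eq]
  have H3 : ∀ l, l ≠ i → v l ∈ I := fun l hl => congr_offdiag I u hu l i hl
  have H4 : ∀ l, l ≠ j → w l ∈ I :=
    fun l hl => congr_offdiag I u⁻¹ (inv_mem hu) j l (Ne.symm hl)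
  have H5 : v i * x * w j - x ∈ I := by
    rw [mem_iff_pi]
    rw [map_sub, _root_.map_mul, _root_.map_mul]
    have hdiag : π (u.val i i) * π x = π x * π (u.val j j) := by
      have := congr_diag I u hu i j hij x
      rw [_root_.map_mul, _root_.map_mul] at this
      exact this
    have hdd : π (u.val j j) * π ((u⁻¹).val j j) = 1 := by
      have hjj := congrArg (fun M => M j j) hmulinv
      simp only [Matrix.mul_apply, Matrix.one_apply_eq] at hjj
      have hπjj := congrArg π hjj
      rw [map_sum, _root_.map_one] at hπjj
      rw [Finset.sum_eq_single j] at hπjj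
      · rw [_root_.map_mul] at hπjj
        exact hπjj
      · intro m _ hmj
        rw [_root_.map_mul]
        have : π (u.val j m) = 0 := (mem_iff_pi I _).mp (congr_offdiag I u hu j m (Ne.symm hmj))
        rw [this, zero_mul]
      · intro hj; exact absurd (Finset.mem_univ j) hj
    have : π (v i) * π x * π (w j) = π x := by
      rw [hvdef, hwdef]; simp only
      rw [hdiag, mul_assoc, hdd, mul_one]
    rw [this, sub_self]
  set Y : (Matrix (Fin n) (Fin n) R)ˣ := u * (transv i j hij x)⁻¹ * u⁻¹ with hYdef
  have hY : Y.val = 1 - vecMulVec v (fun b => x * w b) := by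
    rw [hYdef, Units.val_mul, Units.val_mul]
    have hval : ((transv i j hij x)⁻¹).val = 1 + Matrix.single i j (-x) := rfl
    rw [hval]
    have expand : u.val * (1 + Matrix.single i j (-x)) * (u⁻¹).val
        = u.val * (u⁻¹).val + u.val * Matrix.single i j (-x) * (u⁻¹).val := by
      noncomm_ring
    rw [expand, hmulinv]
    ext a b
    rw [Matrix.add_apply, Matrix.sub_apply, mul_std_mul_apply, vecMulVec_apply]
    have : u.val a i * (-x) * (u⁻¹).val j b = -(v a * (x * w b)) := by
      rw [hvdef, hwdef]; simp only
      noncomm_ring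
    rw [this]
    abel
  have hcomm : ⁅transv i j hij x, u⁆ = transv i j hij x * Y := by
    rw [hYdef, commutatorElement_def]
    group
  rw [hcomm]
  exact coreLemma hR I i j hij x v w z H1 H2 H3 H4 H5 Y hY

end Main
open scoped commutatorElement

theorem commutator_congr_le_relElem {n : ℕ} (R : Type*) [Ring R]
    (hR : IsExchangeRing R) (hn : 1 ≤ n) (I : TwoSidedIdeal R) :
    ⁅elemGroup n R, congrSubgroup n R I⁆ ≤ relElem n R I := by
  rw [Subgroup.commutator_le]
  intro g1 hg1 g2 hg2
  have key : ∀ u ∈ congrSubgroup n R I, ⁅g1, u⁆ ∈ relElem n R I := by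
    induction hg1 using Subgroup.closure_induction with
    | mem g hg =>
      obtain ⟨i, j, hij, x, rfl⟩ := hg
      intro u hu
      exact commutator_transv_mem hR I i j hij x u hu
    | one =>
      intro u hu
      have : ⁅(1 : (Matrix (Fin n) (Fin n) R)ˣ), u⁆ = 1 := by
        rw [commutatorElement_def]; group
      rw [this]; exact one_mem _
    | mul a b ha hb iha ihb =>
      intro u hu
      have hid : ⁅a * b, u⁆ = a * ⁅b, u⁆ * a⁻¹ * ⁅a, u⁆ := by
        rw [commutatorElement_def, commutatorElement_def, commutatorElement_def]
        group
      rw [hid]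
      exact mul_mem (conj_mem_relElem ha (ihb u hu)) (iha u hu)
    | inv a ha iha =>
      intro u hu
      have hid : ⁅a⁻¹, u⁆ = a⁻¹ * ⁅a, u⁆⁻¹ * (a⁻¹)⁻¹ := by
        rw [commutatorElement_def, commutatorElement_def]
        group
      rw [hid]
      exact conj_mem_relElem (inv_mem ha) (inv_mem (iha u hu))
  exact key g2 hg2
end
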